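/- arXiv:q-bio/0701036 — 5 statements merged into one kernel-verified Lean document; each statement's English description precedes it below -/
import Mathlib

section
/- If a : ℕ → ℝ is an ℝ₊-rational sequence that is summable with sum s = ∑ₙ a n > 0, then the normalized sequence n ↦ a n / s is a discrete phase-type (PH) distribution on ℕ. -/
open Matrix

/-- `p` is a probability distribution on ℕ. -/
def IsProbDist (p : ℕ → ℝ) : Prop :=
  (∀ n, 0 ≤ p n) ∧ HasSum p 1

/-- `p` is a discrete phase-type (PH) distribution on ℕ. -/
def IsPH (p : ℕ → ℝ) : Prop :=
  IsProbDist p ∧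
  ∃ m : ℕ, 1 ≤ m ∧
    ∃ (α : Fin m → ℝ) (T : Matrix (Fin m) (Fin m) ℝ),
      (∀ i, 0 ≤ α i) ∧ (∑ i, α i) ≤ 1 ∧
      (∀ i j, 0 ≤ T i j) ∧ (∀ i, (∑ j, T i j) ≤ 1) ∧
      p 0 = 1 - ∑ i, α i ∧
      ∀ n, 1 ≤ n → p n = α ⬝ᵥ (T ^ (n - 1)).mulVec (fun i => 1 - ∑ j, T i j)

/-- `a` is an ℝ₊-rational sequence. -/
def IsRPlusRational (a : ℕ → ℝ) : Prop :=
  ∃ m : ℕ, 1 ≤ m ∧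
    ∃ (M : Matrix (Fin m) (Fin m) ℝ) (u v : Fin m → ℝ),
      (∀ i j, 0 ≤ M i j) ∧ (∀ i, 0 ≤ u i) ∧ (∀ i, 0 ≤ v i) ∧
      ∀ n, a n = u ⬝ᵥ (M ^ n).mulVec v

/-- A summable ℝ₊-rational sequence with positive sum, normalized to unit sum,
is a discrete PH distribution. -/
theorem normalized_rplus_rational_is_ph (a : ℕ → ℝ) (s : ℝ)
    (ha : IsRPlusRational a) (hs : HasSum a s) (hspos : 0 < s) :
    IsPH (fun n => a n / s) := by
  classical
  obtain ⟨m, hm, M, u, v, hM, hu, hv, hav⟩ := ha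
  -- f j n = (Mⁿ v)_j
  set f : Fin m → ℕ → ℝ := fun j n => ((M ^ n).mulVec v) j with hf
  have hMn : ∀ n i k, 0 ≤ (M ^ n) i k := by
    intro n
    induction n with
    | zero => intro i k; by_cases h : i = k <;> simp [Matrix.one_apply, h]
    | succ n ih =>
      intro i k
      rw [pow_succ, Matrix.mul_apply]
      exact Finset.sum_nonneg fun l _ => mul_nonneg (ih i l) (hM l k)
  have hf0 : ∀ j n, 0 ≤ f j n := by
    intro j n
    simp only [hf, Matrix.mulVec, dotProduct]
    exact Finset.sum_nonneg fun k _ => mul_nonneg (hMn n j k) (hv k)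
  have hfsucc : ∀ j n, f j (n + 1) = ∑ k, M j k * f k n := by
    intro j n
    have h1 : (M ^ (n + 1)).mulVec v = M.mulVec ((M ^ n).mulVec v) := by
      rw [pow_succ', ← mulVec_mulVec]
    show ((M ^ (n + 1)).mulVec v) j = _
    rw [h1]
    rfl
  have hf0eq : ∀ j, f j 0 = v j := by intro j; simp [hf]
  have haf : ∀ n, a n = ∑ j, u j * f j n := by
    intro n; rw [hav]; rfl
  have haf1 : ∀ n, a (n + 1) = ∑ j, M.vecMul u j * f j n := by
    intro n
    rw [hav, pow_succ', ← mulVec_mulVec, dotProduct_mulVec]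
    rfl
  have huM : ∀ j, 0 ≤ M.vecMul u j := by
    intro j
    simp only [Matrix.vecMul, dotProduct]
    exact Finset.sum_nonneg fun i _ => mul_nonneg (hu i) (hM i j)
  have ha0 : ∀ n, 0 ≤ a n := by
    intro n; rw [haf]
    exact Finset.sum_nonneg fun j _ => mul_nonneg (hu j) (hf0 j n)
  have hbound : ∀ j n, M.vecMul u j * f j n ≤ a (n + 1) := by
    intro j n; rw [haf1]
    exact Finset.single_le_sum (fun k _ => mul_nonneg (huM k) (hf0 k n)) (Finset.mem_univ j)
  have hsumsucc : Summable fun n => a (n + 1) := (summable_nat_add_iff 1).mpr hs.summable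
  have hsummul : ∀ j, Summable fun n => M.vecMul u j * f j n := fun j =>
    Summable.of_nonneg_of_le (fun n => mul_nonneg (huM j) (hf0 j n)) (fun n => hbound j n) hsumsucc
  have hsumj : ∀ j, M.vecMul u j ≠ 0 → Summable (f j) := by
    intro j hne
    have h2 := (hsummul j).mul_left (M.vecMul u j)⁻¹
    have h3 : (fun n => (M.vecMul u j)⁻¹ * (M.vecMul u j * f j n)) = f j := by
      funext n; rw [← mul_assoc, inv_mul_cancel₀ hne, one_mul]
    rwa [h3] at h2
  -- the "good" states and total occupation weights
  set w : Fin m → ℝ := fun j => ∑' n, f j n with hw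
  set P : Fin m → Prop := fun j => Summable (f j) ∧ 0 < w j with hP
  have hw0 : ∀ j, 0 ≤ w j := fun j => tsum_nonneg (fun n => hf0 j n)
  have hfzero : ∀ j, Summable (f j) → ¬P j → ∀ n, f j n = 0 := by
    intro j hsj hnPj n
    have hwj : w j = 0 := by
      by_contra h
      exact hnPj ⟨hsj, lt_of_le_of_ne (hw0 j) (Ne.symm h)⟩
    have h1 : f j n ≤ w j := Summable.le_tsum hsj n fun k _ => hf0 j k
    linarith [hf0 j n]
  -- from a good state, each transition-weighted sequence is summable
  have hsumMk : ∀ j, Summable (f j) → ∀ k, Summable fun n => M j k * f k n := by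
    intro j hsj k
    have hshift : Summable fun n => f j (n + 1) := (summable_nat_add_iff 1).mpr hsj
    refine Summable.of_nonneg_of_le (fun n => mul_nonneg (hM j k) (hf0 k n)) (fun n => ?_) hshift
    rw [hfsucc]
    exact Finset.single_le_sum (fun l _ => mul_nonneg (hM j l) (hf0 l n)) (Finset.mem_univ k)
  have hMclosed : ∀ j, Summable (f j) → ∀ k, M j k ≠ 0 → Summable (f k) := by
    intro j hsj k hne
    have h2 := (hsumMk j hsj k).mul_left (M j k)⁻¹
    have h3 : (fun n => (M j k)⁻¹ * (M j k * f k n)) = f k := by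
      funext n; rw [← mul_assoc, inv_mul_cancel₀ hne, one_mul]
    rwa [h3] at h2
  -- key recursion for w on good states
  have hwrec : ∀ j, P j → ∑ k, M j k * (if P k then w k else 0) = w j - v j := by
    intro j hPj
    have hsplit : w j = f j 0 + ∑' n, f j (n + 1) := Summable.tsum_eq_zero_add hPj.1
    have hswap : ∑' n, f j (n + 1) = ∑ k, ∑' n, M j k * f k n := by
      rw [tsum_congr fun n => hfsucc j n]
      exact Summable.tsum_finsetSum fun k _ => hsumMk j hPj.1 k
    have hper : ∀ k, ∑' n, M j k * f k n = M j k * (if P k then w k else 0) := by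
      intro k
      by_cases hMk : M j k = 0
      · simp [hMk]
      · have hsk : Summable (f k) := hMclosed j hPj.1 k hMk
        rw [tsum_mul_left]
        by_cases hPk : P k
        · rw [if_pos hPk]
        · rw [if_neg hPk]
          have hwk : (∑' n, f k n) = 0 := by
            have h4 : ∑' n, f k n = ∑' n, (0 : ℝ) := tsum_congr (hfzero k hsk hPk)
            simpa using h4
          rw [hwk, mul_zero]
    calc ∑ k, M j k * (if P k then w k else 0) = ∑ k, ∑' n, M j k * f k n := by
          exact Finset.sum_congr rfl fun k _ => (hper k).symm
      _ = ∑' n, f j (n + 1) := hswap.symm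
      _ = w j - v j := by rw [hf0eq j] at hsplit; linarith
  -- the PH representation
  set T : Matrix (Fin m) (Fin m) ℝ :=
    fun j k => if P j ∧ P k then M j k * w k / w j else 0 with hT
  set α : Fin m → ℝ := fun j => if P j then M.vecMul u j * w j / s else 0 with hα
  have hT0 : ∀ j k, 0 ≤ T j k := by
    intro j k
    simp only [hT]
    split
    · next h => exact div_nonneg (mul_nonneg (hM j k) (hw0 k)) (hw0 j)
    · exact le_refl 0
  have hTrow : ∀ j, P j → ∑ k, T j k = 1 - v j / w j := by
    intro j hPj
    have hwj : w j ≠ 0 := ne_of_gt hPj.2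
    have : ∑ k, T j k = (∑ k, M j k * (if P k then w k else 0)) / w j := by
      rw [Finset.sum_div]
      refine Finset.sum_congr rfl fun k _ => ?_
      simp only [hT]
      by_cases hPk : P k
      · rw [if_pos ⟨hPj, hPk⟩, if_pos hPk]
      · rw [if_neg (fun h => hPk h.2), if_neg hPk, mul_zero, zero_div]
    rw [this, hwrec j hPj, sub_div, div_self hwj]
  have hTrow0 : ∀ j, ¬P j → ∑ k, T j k = 0 := by
    intro j hPj
    refine Finset.sum_eq_zero fun k _ => ?_
    simp [hT, hPj]
  set t : Fin m → ℝ := fun j => 1 - ∑ k, T j k with ht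
  have htval : ∀ j, P j → t j = v j / w j := by
    intro j hPj; simp only [ht]; rw [hTrow j hPj]; ring
  -- powers of T applied to t
  have hTpow : ∀ n j, P j → ((T ^ n).mulVec t) j = f j n / w j := by
    intro n
    induction n with
    | zero =>
      intro j hPj
      rw [pow_zero, one_mulVec, htval j hPj, hf0eq j]
    | succ n ih =>
      intro j hPj
      have hwj : w j ≠ 0 := ne_of_gt hPj.2
      have h1 : (T ^ (n + 1)).mulVec t = T.mulVec ((T ^ n).mulVec t) := by
        rw [pow_succ', ← mulVec_mulVec]
      rw [h1]
      have h2 : T.mulVec ((T ^ n).mulVec t) j = ∑ k, T j k * ((T ^ n).mulVec t) k := rfl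
      rw [h2]
      have h3 : ∀ k, T j k * ((T ^ n).mulVec t) k = M j k * f k n / w j := by
        intro k
        by_cases hPk : P k
        · have hwk : w k ≠ 0 := ne_of_gt hPk.2
          rw [ih k hPk]
          have hTjk : T j k = M j k * w k / w j := by
            simp only [hT]; rw [if_pos ⟨hPj, hPk⟩]
          rw [hTjk]
          field_simp
        · have hTjk : T j k = 0 := by simp [hT, hPk]
          rw [hTjk, zero_mul]
          by_cases hMk : M j k = 0
          · rw [hMk]; ring
          · have hsk : Summable (f k) := hMclosed j hPj.1 k hMk
            rw [hfzero k hsk hPk n]; ring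
      rw [Finset.sum_congr rfl fun k _ => h3 k, ← Finset.sum_div, ← hfsucc]
  -- sum of α
  have hαval : ∀ j, ∑' n, M.vecMul u j * f j n = (if P j then M.vecMul u j * w j else 0) := by
    intro j
    by_cases hje : M.vecMul u j = 0
    · simp [hje]
    · have hsj : Summable (f j) := hsumj j hje
      rw [tsum_mul_left]
      by_cases hPj : P j
      · rw [if_pos hPj]
      · rw [if_neg hPj]
        have hwj : (∑' n, f j n) = 0 := by
          have h4 : ∑' n, f j n = ∑' n, (0 : ℝ) := tsum_congr (hfzero j hsj hPj)
          simpa using h4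
        rw [hwj, mul_zero]
  have hkey : ∑ j, (if P j then M.vecMul u j * w j else 0) = s - a 0 := by
    have h1 : s = a 0 + ∑' n, a (n + 1) := by
      rw [← hs.tsum_eq]; exact Summable.tsum_eq_zero_add hs.summable
    have h2 : ∑' n, a (n + 1) = ∑ j, ∑' n, M.vecMul u j * f j n := by
      rw [tsum_congr fun n => haf1 n]
      exact Summable.tsum_finsetSum fun j _ => hsummul j
    rw [← Finset.sum_congr rfl fun j _ => hαval j, ← h2]
    linarith
  have hαsum : ∑ j, α j = (s - a 0) / s := by
    rw [← hkey, Finset.sum_div]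
    refine Finset.sum_congr rfl fun j _ => ?_
    simp only [hα]
    split <;> simp
  have hsne : s ≠ 0 := ne_of_gt hspos
  refine ⟨⟨fun n => div_nonneg (ha0 n) (le_of_lt hspos), ?_⟩, m, hm, α, T, ?_, ?_, hT0, ?_, ?_, ?_⟩
  · have := hs.div_const s
    rwa [div_self hsne] at this
  · intro j
    simp only [hα]
    split
    · next h => exact div_nonneg (mul_nonneg (huM j) (hw0 j)) (le_of_lt hspos)
    · exact le_refl 0
  · rw [hαsum]
    rw [div_le_one hspos]
    linarith [ha0 0]
  · intro j
    by_cases hPj : P j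
    · rw [hTrow j hPj]
      have := div_nonneg (hv j) (hw0 j)
      linarith
    · rw [hTrow0 j hPj]; norm_num
  · rw [hαsum]
    field_simp
    ring
  · intro n hn
    obtain ⟨k, rfl⟩ : ∃ k, n = k + 1 := ⟨n - 1, (Nat.succ_pred_eq_of_pos hn).symm⟩
    have hidx : k + 1 - 1 = k := rfl
    rw [hidx]
    have hdp : α ⬝ᵥ (T ^ k).mulVec (fun i => 1 - ∑ j, T i j)
        = ∑ j, α j * ((T ^ k).mulVec t) j := rfl
    rw [hdp]
    have h3 : ∀ j, α j * ((T ^ k).mulVec t) j = M.vecMul u j * f j k / s := by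
      intro j
      by_cases hPj : P j
      · have hwj : w j ≠ 0 := ne_of_gt hPj.2
        rw [hTpow k j hPj]
        have hαj : α j = M.vecMul u j * w j / s := by
          simp only [hα]; rw [if_pos hPj]
        rw [hαj]
        field_simp
      · have hαj : α j = 0 := by simp [hα, hPj]
        rw [hαj, zero_mul]
        by_cases hje : M.vecMul u j = 0
        · rw [hje]; ring
        · have hsj : Summable (f j) := hsumj j hje
          rw [hfzero j hsj hPj k]; ring
    rw [Finset.sum_congr rfl fun j _ => h3 j, ← Finset.sum_div, ← haf1]
end

section
/- Let C be the smallest class of probability distributions on ℕ that contains all finitely supported probability distributions and is closed under mixtures (with parameters p ∈ (0,1)), convolutions, and geometric mixtures (with parameters p ∈ (0,1)). Then every discrete phase-type (PH) distribution on ℕ belongs to C. -/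
open Matrix

/-- Convolution of two sequences on ℕ. -/
def conv (q₁ q₂ : ℕ → ℝ) (n : ℕ) : ℝ :=
  ∑ k ∈ Finset.range (n + 1), q₁ k * q₂ (n - k)

/-- `k`-fold convolution power of `q`; `convPow q 0` is the point mass at `0`. -/
def convPow (q : ℕ → ℝ) : ℕ → ℕ → ℝ
  | 0 => fun n => if n = 0 then 1 else 0
  | k + 1 => conv q (convPow q k)

/-- Geometric mixture of `q` with parameter `p`. -/
noncomputable def geomMix (p : ℝ) (q : ℕ → ℝ) (n : ℕ) : ℝ :=
  ∑' k : ℕ, (1 - p) * p ^ k * convPow q k n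

/-- The smallest class of probability distributions on ℕ containing all finitely
supported probability distributions and closed under mixtures, convolutions, and
geometric mixtures (with parameters in `(0,1)`). -/
inductive GenClass : (ℕ → ℝ) → Prop
  | base (p : ℕ → ℝ) (hp : IsProbDist p) (hfin : ∃ N, ∀ n, N ≤ n → p n = 0) :
      GenClass p
  | mix (q₁ q₂ : ℕ → ℝ) (p : ℝ) (h₁ : GenClass q₁) (h₂ : GenClass q₂)
      (hp : p ∈ Set.Ioo (0 : ℝ) 1) :
      GenClass (fun n => p * q₁ n + (1 - p) * q₂ n)
  | conv (q₁ q₂ : ℕ → ℝ) (h₁ : GenClass q₁) (h₂ : GenClass q₂) :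
      GenClass (conv q₁ q₂)
  | geom (q : ℕ → ℝ) (p : ℝ) (hq : GenClass q) (hp : p ∈ Set.Ioo (0 : ℝ) 1) :
      GenClass (geomMix p q)


/-! ### Basic lemmas -/

def delta (a : ℕ) (n : ℕ) : ℝ := if n = a then 1 else 0

lemma isProbDist_delta (a : ℕ) : IsProbDist (delta a) := by
  constructor
  · intro n; unfold delta; split <;> norm_num
  · exact hasSum_ite_eq a 1

lemma genClass_delta (a : ℕ) : GenClass (delta a) :=
  GenClass.base _ (isProbDist_delta a) ⟨a + 1, fun n hn => by simp [delta]; omega⟩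

/-! ### conv lemmas -/

lemma conv_congr_right {b b' : ℕ → ℝ} (a : ℕ → ℝ) (n : ℕ)
    (h : ∀ t, t ≤ n → b t = b' t) : conv a b n = conv a b' n := by
  unfold conv
  refine Finset.sum_congr rfl fun k hk => ?_
  rw [h (n - k) (by omega)]

lemma conv_congr_left {a a' : ℕ → ℝ} (b : ℕ → ℝ) (n : ℕ)
    (h : ∀ t, t ≤ n → a t = a' t) : conv a b n = conv a' b n := by
  unfold conv
  refine Finset.sum_congr rfl fun k hk => ?_
  rw [h k (by simp at hk; omega)]

lemma conv_add_left (a b c : ℕ → ℝ) (n : ℕ) :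
    conv (fun t => a t + b t) c n = conv a c n + conv b c n := by
  simp [conv, add_mul, Finset.sum_add_distrib]

lemma conv_add_right (a b c : ℕ → ℝ) (n : ℕ) :
    conv a (fun t => b t + c t) n = conv a b n + conv a c n := by
  simp [conv, mul_add, Finset.sum_add_distrib]

lemma conv_sum_right {ι : Type*} (s : Finset ι) (a : ℕ → ℝ) (g : ι → ℕ → ℝ) (n : ℕ) :
    conv a (fun t => ∑ j ∈ s, g j t) n = ∑ j ∈ s, conv a (g j) n := by
  simp only [conv, Finset.mul_sum]
  exact Finset.sum_comm

lemma conv_eq_zero_left {a : ℕ → ℝ} (b : ℕ → ℝ) (n : ℕ) (h : ∀ t, a t = 0) :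
    conv a b n = 0 := by
  simp [conv, h]

lemma conv_eq_zero_right {b : ℕ → ℝ} (a : ℕ → ℝ) (n : ℕ) (h : ∀ t, b t = 0) :
    conv a b n = 0 := by
  simp [conv, h]

lemma conv_zero_eq (a b : ℕ → ℝ) : conv a b 0 = a 0 * b 0 := by
  simp [conv]

lemma delta_conv (b : ℕ → ℝ) (n : ℕ) : conv (delta 0) b n = b n := by
  unfold conv
  rw [Finset.sum_eq_single 0]
  · simp [delta]
  · intro k hk hk0; simp [delta, hk0]
  · intro h; simp at h

lemma mk_conv (a b : ℕ → ℝ) :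
    PowerSeries.mk (conv a b) = PowerSeries.mk a * PowerSeries.mk b := by
  ext n
  rw [PowerSeries.coeff_mk, PowerSeries.coeff_mul,
    Finset.Nat.sum_antidiagonal_eq_sum_range_succ_mk]
  simp [conv, PowerSeries.coeff_mk]

lemma conv_assoc (a b c : ℕ → ℝ) (n : ℕ) :
    conv (conv a b) c n = conv a (conv b c) n := by
  have h1 : PowerSeries.mk (conv (conv a b) c) = PowerSeries.mk (conv a (conv b c)) := by
    rw [mk_conv, mk_conv, mk_conv, mk_conv, mul_assoc]
  have h2 := congrArg (PowerSeries.coeff n) h1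
  simpa [PowerSeries.coeff_mk] using h2

lemma conv_smul_smul (a b : ℕ → ℝ) (x y : ℝ) (n : ℕ) :
    conv (fun t => x * a t) (fun t => y * b t) n = x * y * conv a b n := by
  simp only [conv, Finset.mul_sum]
  refine Finset.sum_congr rfl fun k _ => by ring

lemma isProbDist_conv {a b : ℕ → ℝ} (ha : IsProbDist a) (hb : IsProbDist b) :
    IsProbDist (conv a b) := by
  constructor
  · intro n
    exact Finset.sum_nonneg fun k _ => mul_nonneg (ha.1 k) (hb.1 (n - k))
  · have hna : Summable fun x => ‖a x‖ := by
      simpa [Real.norm_eq_abs, abs_of_nonneg (ha.1 _)] using ha.2.summable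
    have hnb : Summable fun x => ‖b x‖ := by
      simpa [Real.norm_eq_abs, abs_of_nonneg (hb.1 _)] using hb.2.summable
    have := hasSum_sum_range_mul_of_summable_norm hna hnb
    rw [ha.2.tsum_eq, hb.2.tsum_eq] at this
    simp only [mul_one] at this
    exact this

/-! ### convPow lemmas -/

lemma convPow_zero_def (q : ℕ → ℝ) (n : ℕ) : convPow q 0 n = delta 0 n := rfl

lemma isProbDist_convPow {q : ℕ → ℝ} (hq : IsProbDist q) (k : ℕ) :
    IsProbDist (convPow q k) := by
  induction k with
  | zero => exact isProbDist_delta 0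
  | succ k ih => exact isProbDist_conv hq ih

lemma convPow_eq_zero {q : ℕ → ℝ} (hq0 : q 0 = 0) :
    ∀ k n, n < k → convPow q k n = 0 := by
  intro k
  induction k with
  | zero => omega
  | succ k ih =>
    intro n hn
    show conv q (convPow q k) n = 0
    unfold conv
    refine Finset.sum_eq_zero fun s hs => ?_
    simp only [Finset.mem_range] at hs
    rcases Nat.eq_zero_or_pos s with h0 | h1
    · rw [h0, hq0, zero_mul]
    · rw [ih (n - s) (by omega), mul_zero]

lemma convPow_smul (q : ℕ → ℝ) (c : ℝ) (k n : ℕ) :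
    convPow (fun t => c * q t) k n = c ^ k * convPow q k n := by
  induction k generalizing n with
  | zero => simp [convPow]
  | succ k ih =>
    simp only [convPow, conv, Finset.mul_sum]
    refine Finset.sum_congr rfl fun s _ => ?_
    rw [ih]; ring

/-! ### geomMix is a probability distribution -/

lemma isProbDist_geomMix {c : ℝ} {q : ℕ → ℝ} (hc0 : 0 < c) (hc1 : c < 1)
    (hq : IsProbDist q) : IsProbDist (geomMix c q) := by
  set F : ℕ × ℕ → ℝ := fun p => (1 - c) * c ^ p.1 * convPow q p.1 p.2 with hF
  have hF0 : ∀ p, 0 ≤ F p := by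
    intro p
    exact mul_nonneg (mul_nonneg (by linarith) (by positivity))
      ((isProbDist_convPow hq p.1).1 p.2)
  have hrow : ∀ k, HasSum (fun n => F (k, n)) ((1 - c) * c ^ k) := by
    intro k
    have := (isProbDist_convPow hq k).2.mul_left ((1 - c) * c ^ k)
    simpa using this
  have hgeo : Summable fun k : ℕ => (1 - c) * c ^ k :=
    (summable_geometric_of_lt_one hc0.le hc1).mul_left _
  have hFsum : Summable F := by
    rw [summable_prod_of_nonneg hF0]
    refine ⟨fun k => (hrow k).summable, ?_⟩
    have : (fun k : ℕ => ∑' n, F (k, n)) = fun k => (1 - c) * c ^ k := by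
      funext k; exact (hrow k).tsum_eq
    rw [this]; exact hgeo
  have hFsum' : Summable fun p : ℕ × ℕ => F p.swap := hFsum.prod_symm
  have hmarg : Summable (geomMix c q) := by
    have h := (summable_prod_of_nonneg (fun p => hF0 p.swap)).mp hFsum'
    have : (fun n => ∑' k, F (k, n)) = geomMix c q := by
      funext n; rfl
    rw [← this]
    exact h.2
  have htsum : ∑' n, geomMix c q n = 1 := by
    have hfib : ∀ n : ℕ, Summable fun k => F (k, n) := by
      intro n
      exact ((summable_prod_of_nonneg (fun p => hF0 p.swap)).mp hFsum').1 n
    have e1 : ∑' n, geomMix c q n = ∑' (p : ℕ × ℕ), F p.swap := by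
      rw [Summable.tsum_prod' hFsum' hfib]; rfl
    have e2 : ∑' (p : ℕ × ℕ), F p.swap = ∑' p, F p := by
      exact ((Equiv.prodComm ℕ ℕ).tsum_eq F)
    have e3 : ∑' p, F p = ∑' k, ((1 - c) * c ^ k) := by
      rw [Summable.tsum_prod' hFsum (fun k => (hrow k).summable)]
      exact tsum_congr fun k => (hrow k).tsum_eq
    have e4 : ∑' k : ℕ, ((1 - c) * c ^ k) = 1 := by
      rw [tsum_mul_left, tsum_geometric_of_lt_one hc0.le hc1]
      have : (1:ℝ) - c ≠ 0 := by linarith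
      field_simp
    rw [e1, e2, e3, e4]
  constructor
  · intro n
    exact tsum_nonneg fun k => hF0 (k, n)
  · rw [hmarg.hasSum_iff]; exact htsum

/-! ### Scaled GenClass elements -/

/-- `f` is `c` times a distribution in `GenClass`. -/
def SG (c : ℝ) (f : ℕ → ℝ) : Prop :=
  ∃ q, GenClass q ∧ IsProbDist q ∧ ∀ n, f n = c * q n

lemma sg_zero {f : ℕ → ℝ} (h : ∀ n, f n = 0) : SG 0 f :=
  ⟨delta 0, genClass_delta 0, isProbDist_delta 0, fun n => by rw [h n, zero_mul]⟩

lemma sg_eq_zero {f : ℕ → ℝ} (h : SG 0 f) : ∀ n, f n = 0 := by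
  obtain ⟨q, _, _, hf⟩ := h
  intro n; rw [hf n, zero_mul]

lemma sg_scale {q : ℕ → ℝ} (a : ℝ) (hq : GenClass q) (hqp : IsProbDist q) :
    SG a (fun n => a * q n) := ⟨q, hq, hqp, fun _ => rfl⟩

lemma sg_add {a b : ℝ} {f g : ℕ → ℝ} (ha : 0 ≤ a) (hb : 0 ≤ b)
    (hf : SG a f) (hg : SG b g) : SG (a + b) (fun n => f n + g n) := by
  obtain ⟨q₁, hq₁, hq₁p, hfq⟩ := hf
  obtain ⟨q₂, hq₂, hq₂p, hgq⟩ := hg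
  rcases eq_or_lt_of_le ha with ha0 | ha0
  · exact ⟨q₂, hq₂, hq₂p, fun n => by show f n + g n = _; rw [hfq n, hgq n, ← ha0]; ring⟩
  rcases eq_or_lt_of_le hb with hb0 | hb0
  · exact ⟨q₁, hq₁, hq₁p, fun n => by show f n + g n = _; rw [hfq n, hgq n, ← hb0]; ring⟩
  have hab : 0 < a + b := by linarith
  set p := a / (a + b) with hp
  have hp0 : 0 < p := div_pos ha0 hab
  have hp1 : p < 1 := by
    rw [hp, div_lt_one hab]; linarith
  refine ⟨fun n => p * q₁ n + (1 - p) * q₂ n,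
    GenClass.mix q₁ q₂ p hq₁ hq₂ ⟨hp0, hp1⟩, ?_, ?_⟩
  · constructor
    · intro n
      have := hq₁p.1 n; have := hq₂p.1 n
      have : 0 ≤ 1 - p := by linarith
      positivity
    · have := (hq₁p.2.mul_left p).add (hq₂p.2.mul_left (1 - p))
      simpa using this
  · intro n
    show f n + g n = _
    simp only []
    rw [hfq n, hgq n]
    have h1p : (1 : ℝ) - p = b / (a + b) := by
      rw [hp]; field_simp; ring
    rw [hp, h1p]
    field_simp
    try ring

lemma sg_conv {a b : ℝ} {f g : ℕ → ℝ} (hf : SG a f) (hg : SG b g) :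
    SG (a * b) (conv f g) := by
  obtain ⟨q₁, hq₁, hq₁p, hfq⟩ := hf
  obtain ⟨q₂, hq₂, hq₂p, hgq⟩ := hg
  refine ⟨conv q₁ q₂, GenClass.conv q₁ q₂ hq₁ hq₂, isProbDist_conv hq₁p hq₂p, fun n => ?_⟩
  have : conv f g n = conv (fun t => a * q₁ t) (fun t => b * q₂ t) n := by
    unfold conv
    exact Finset.sum_congr rfl fun k _ => by rw [hfq k, hgq (n - k)]
  rw [this, conv_smul_smul]

/-! ### The Neumann series `ghat` -/

/-- Pointwise-finite Neumann series `∑ₖ w^{∗k}` for `w` with `w 0 = 0`. -/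
noncomputable def ghat (w : ℕ → ℝ) (n : ℕ) : ℝ :=
  ∑ k ∈ Finset.range (n + 1), convPow w k n

lemma ghat_ext {w : ℕ → ℝ} (hw0 : w 0 = 0) {n N : ℕ} (h : n ≤ N) :
    ∑ k ∈ Finset.range (N + 1), convPow w k n = ghat w n := by
  unfold ghat
  symm
  refine Finset.sum_subset (by simp; omega) fun k hk hk' => ?_
  simp only [Finset.mem_range] at hk hk'
  exact convPow_eq_zero hw0 k n (by omega)

lemma ghat_neumann {w : ℕ → ℝ} (hw0 : w 0 = 0) (n : ℕ) :
    ghat w n = delta 0 n + conv w (ghat w) n := by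
  have h1 : conv w (ghat w) n
      = conv w (fun t => ∑ k ∈ Finset.range (n + 1), convPow w k t) n := by
    refine conv_congr_right w n fun t ht => ?_
    exact (ghat_ext hw0 ht).symm
  rw [h1, conv_sum_right]
  have h2 : ∀ k ∈ Finset.range (n + 1), conv w (convPow w k) n = convPow w (k + 1) n :=
    fun k _ => rfl
  rw [Finset.sum_congr rfl h2]
  have h3 : ghat w n = ∑ k ∈ Finset.range (n + 1 + 1), convPow w k n :=
    (ghat_ext hw0 (by omega)).symm
  rw [h3, Finset.sum_range_succ']
  rw [convPow_zero_def]
  ring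

lemma sg_ghat {c : ℝ} {w : ℕ → ℝ} (hc0 : 0 ≤ c) (hc1 : c < 1) (hsg : SG c w)
    (hw0 : w 0 = 0) : SG (1 - c)⁻¹ (ghat w) := by
  obtain ⟨q, hq, hqp, hwq⟩ := hsg
  rcases eq_or_lt_of_le hc0 with hc | hc
  · -- c = 0, w = 0, ghat w = delta 0
    refine ⟨delta 0, genClass_delta 0, isProbDist_delta 0, fun n => ?_⟩
    have hwz : ∀ t, w t = 0 := fun t => by rw [hwq t, ← hc, zero_mul]
    have : ghat w n = convPow w 0 n := by
      unfold ghat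
      rw [Finset.sum_eq_single 0]
      · intro k hk hk0
        rcases Nat.exists_eq_succ_of_ne_zero hk0 with ⟨k', rfl⟩
        show conv w (convPow w k') n = 0
        exact conv_eq_zero_left _ n hwz
      · intro h; simp at h
    rw [this, convPow_zero_def, ← hc]
    norm_num
  · -- 0 < c
    have hq0 : q 0 = 0 := by
      have := hwq 0
      rw [hw0] at this
      have := this.symm
      rcases mul_eq_zero.mp this with h | h
      · exact absurd h (by linarith)
      · exact h
    refine ⟨geomMix c q, GenClass.geom q c hq ⟨hc, hc1⟩,
      isProbDist_geomMix hc hc1 hqp, fun n => ?_⟩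
    have hmix : geomMix c q n = ∑ k ∈ Finset.range (n + 1), (1 - c) * c ^ k * convPow q k n := by
      unfold geomMix
      refine tsum_eq_sum fun k hk => ?_
      simp only [Finset.mem_range] at hk
      rw [convPow_eq_zero hq0 k n (by omega), mul_zero]
    have hgw : ghat w n = ∑ k ∈ Finset.range (n + 1), c ^ k * convPow q k n := by
      unfold ghat
      refine Finset.sum_congr rfl fun k _ => ?_
      have : w = fun t => c * q t := funext hwq
      rw [this, convPow_smul]
    rw [hgw, hmix, Finset.mul_sum]
    refine Finset.sum_congr rfl fun k _ => ?_
    have h1c : (1 : ℝ) - c ≠ 0 := by linarith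
    field_simp

/-! ### The absorption-time system and its solution -/

/-- The unique solution of `f n i = ∑ⱼ (W i j ∗ f ⬝ j) n + U i n` (for `W i j 0 = 0`). -/
noncomputable def sol {m : ℕ} (W : Fin m → Fin m → ℕ → ℝ) (U : Fin m → ℕ → ℝ) :
    ℕ → Fin m → ℝ
  | n, i =>
    (∑ j, ∑ k ∈ (Finset.Icc 1 n).attach,
      W i j (k : ℕ) * sol W U (n - (k : ℕ)) j) + U i n
termination_by n _ => n
decreasing_by
  have h2 := k.2
  simp only [Finset.mem_Icc] at h2
  omega

lemma sol_spec {m : ℕ} (W : Fin m → Fin m → ℕ → ℝ) (U : Fin m → ℕ → ℝ)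
    (hW0 : ∀ i j, W i j 0 = 0) (n : ℕ) (i : Fin m) :
    sol W U n i = (∑ j, conv (W i j) (fun s => sol W U s j) n) + U i n := by
  rw [sol.eq_def]
  show (∑ j, ∑ k ∈ (Finset.Icc 1 n).attach, W i j (k : ℕ) * sol W U (n - (k : ℕ)) j)
      + U i n = _
  have key : ∀ j : Fin m,
      (∑ k ∈ (Finset.Icc 1 n).attach, W i j (k : ℕ) * sol W U (n - (k : ℕ)) j)
        = conv (W i j) (fun s => sol W U s j) n := by
    intro j
    rw [Finset.sum_attach (Finset.Icc 1 n) (fun k => W i j k * sol W U (n - k) j)]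
    unfold conv
    have hins : Finset.range (n + 1) = insert 0 (Finset.Icc 1 n) := by
      ext k; simp; omega
    rw [hins, Finset.sum_insert (by simp), hW0 i j, zero_mul, zero_add]
  rw [Finset.sum_congr rfl fun j _ => key j]

lemma sol_unique {m : ℕ} (W : Fin m → Fin m → ℕ → ℝ) (U : Fin m → ℕ → ℝ)
    (hW0 : ∀ i j, W i j 0 = 0) (x : ℕ → Fin m → ℝ)
    (hx : ∀ n i, x n i = (∑ j, conv (W i j) (fun s => x s j) n) + U i n) :
    ∀ n i, x n i = sol W U n i := by
  intro n
  induction n using Nat.strong_induction_on with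
  | _ n IH =>
    intro i
    rw [hx n i, sol_spec W U hW0 n i]
    congr 1
    refine Finset.sum_congr rfl fun j _ => ?_
    unfold conv
    refine Finset.sum_congr rfl fun k hk => ?_
    simp only [Finset.mem_range] at hk
    rcases Nat.eq_zero_or_pos k with h0 | h1
    · rw [h0, hW0 i j, zero_mul, zero_mul]
    · change W i j k * x (n - k) j = W i j k * sol W U (n - k) j
      rw [IH (n - k) (by omega) j]

/-- Uniqueness for the scalar equation `x = w ∗ x + h` with `w 0 = 0`. -/
lemma scalar_unique {w h x y : ℕ → ℝ} (hw0 : w 0 = 0)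
    (hx : ∀ n, x n = conv w x n + h n) (hy : ∀ n, y n = conv w y n + h n) :
    ∀ n, x n = y n := by
  intro n
  induction n using Nat.strong_induction_on with
  | _ n IH =>
    rw [hx n, hy n]
    congr 1
    unfold conv
    refine Finset.sum_congr rfl fun k hk => ?_
    simp only [Finset.mem_range] at hk
    rcases Nat.eq_zero_or_pos k with h0 | h1
    · rw [h0, hw0, zero_mul, zero_mul]
    · rw [IH (n - k) (by omega)]

/-! ### One-state elimination -/

/-- `a + x ∗ G ∗ y`, the basic combinator appearing in state elimination. -/
noncomputable def elim1 (G x y a : ℕ → ℝ) : ℕ → ℝ :=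
  fun t => a t + conv x (conv G y) t

lemma elim1_zero (G x y a : ℕ → ℝ) (hx0 : x 0 = 0) (ha0 : a 0 = 0) :
    elim1 G x y a 0 = 0 := by
  unfold elim1
  rw [conv_zero_eq, hx0, ha0]; ring

lemma conv_elim1 (G x y a f : ℕ → ℝ) (n : ℕ) :
    conv (elim1 G x y a) f n = conv a f n + conv (conv x (conv G y)) f n :=
  conv_add_left a (conv x (conv G y)) f n

lemma sg_elim1 {c a' x' y' : ℝ} {w a x y : ℕ → ℝ}
    (hc0 : 0 ≤ c) (hc1 : c ≤ 1) (hsgw : SG c w) (hw0 : w 0 = 0)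
    (ha' : 0 ≤ a') (hx' : 0 ≤ x') (hy' : 0 ≤ y')
    (hsga : SG a' a) (hsgx : SG x' x) (hsgy : SG y' y)
    (hy1 : c = 1 → y' = 0) :
    SG (a' + x' * ((1 - c)⁻¹ * y')) (elim1 (ghat w) x y a) := by
  have hkey : SG ((1 - c)⁻¹ * y') (conv (ghat w) y) := by
    rcases lt_or_eq_of_le hc1 with hlt | heq
    · exact sg_conv (sg_ghat hc0 hlt hsgw hw0) hsgy
    · have hy0 : y' = 0 := hy1 heq
      have hyz : ∀ t, y t = 0 := sg_eq_zero (hy0 ▸ hsgy)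
      have h0 : SG 0 (conv (ghat w) y) := sg_zero fun n => conv_eq_zero_right _ n hyz
      simpa [hy0] using h0
  have := sg_add ha'
    (mul_nonneg hx' (mul_nonneg (inv_nonneg.mpr (by linarith)) hy'))
    hsga (sg_conv hsgx hkey)
  exact this

lemma sol_last {m : ℕ} (W : Fin (m + 1) → Fin (m + 1) → ℕ → ℝ) (U : Fin (m + 1) → ℕ → ℝ)
    (hW0 : ∀ i j, W i j 0 = 0) (n : ℕ) :
    sol W U n (Fin.last m)
      = conv (ghat (W (Fin.last m) (Fin.last m)))
          (fun t => (∑ j : Fin m,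
              conv (W (Fin.last m) j.castSucc) (fun s => sol W U s j.castSucc) t)
            + U (Fin.last m) t) n := by
  set h : ℕ → ℝ := fun t => (∑ j : Fin m,
      conv (W (Fin.last m) j.castSucc) (fun s => sol W U s j.castSucc) t)
    + U (Fin.last m) t with hh
  have hfLrec : ∀ n, sol W U n (Fin.last m)
      = conv (W (Fin.last m) (Fin.last m)) (fun s => sol W U s (Fin.last m)) n + h n := by
    intro n
    show sol W U n (Fin.last m)
      = conv (W (Fin.last m) (Fin.last m)) (fun s => sol W U s (Fin.last m)) n
        + ((∑ j : Fin m,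
            conv (W (Fin.last m) j.castSucc) (fun s => sol W U s j.castSucc) n)
          + U (Fin.last m) n)
    rw [sol_spec W U hW0 n (Fin.last m), Fin.sum_univ_castSucc]
    ring
  have hGrec : ∀ n, conv (ghat (W (Fin.last m) (Fin.last m))) h n
      = conv (W (Fin.last m) (Fin.last m))
          (conv (ghat (W (Fin.last m) (Fin.last m))) h) n + h n := by
    intro n
    have e1 : conv (W (Fin.last m) (Fin.last m))
          (conv (ghat (W (Fin.last m) (Fin.last m))) h) n + h n
        = conv (fun t => delta 0 t
            + conv (W (Fin.last m) (Fin.last m)) (ghat (W (Fin.last m) (Fin.last m))) t) h n := by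
      rw [conv_add_left, delta_conv, conv_assoc]
      ring
    rw [e1]
    exact conv_congr_left h n fun t _ => ghat_neumann (hW0 _ _) t
  exact scalar_unique (hW0 _ _) hfLrec hGrec n

lemma expand_last {m : ℕ} (W : Fin (m + 1) → Fin (m + 1) → ℕ → ℝ) (U : Fin (m + 1) → ℕ → ℝ)
    (hW0 : ∀ i j, W i j 0 = 0) (x : ℕ → ℝ) (n : ℕ) :
    conv x (fun s => sol W U s (Fin.last m)) n
      = (∑ j : Fin m, conv
          (conv x (conv (ghat (W (Fin.last m) (Fin.last m))) (W (Fin.last m) j.castSucc)))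
          (fun s => sol W U s j.castSucc) n)
        + conv x (conv (ghat (W (Fin.last m) (Fin.last m))) (U (Fin.last m))) n := by
  have h0 : conv x (fun s => sol W U s (Fin.last m)) n
      = conv x (conv (ghat (W (Fin.last m) (Fin.last m)))
          (fun t => (∑ j : Fin m,
              conv (W (Fin.last m) j.castSucc) (fun s => sol W U s j.castSucc) t)
            + U (Fin.last m) t)) n :=
    conv_congr_right x n fun t _ => sol_last W U hW0 t
  rw [h0, ← conv_assoc, conv_add_right, conv_sum_right]
  congr 1
  · refine Finset.sum_congr rfl fun j _ => ?_
    rw [← conv_assoc]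
    exact conv_congr_left _ n fun t _ => conv_assoc _ _ _ t
  · rw [conv_assoc]

lemma sol_elim {m : ℕ} (W : Fin (m + 1) → Fin (m + 1) → ℕ → ℝ) (U : Fin (m + 1) → ℕ → ℝ)
    (hW0 : ∀ i j, W i j 0 = 0) (n : ℕ) (i : Fin m) :
    sol (fun i j => elim1 (ghat (W (Fin.last m) (Fin.last m)))
          (W i.castSucc (Fin.last m)) (W (Fin.last m) j.castSucc) (W i.castSucc j.castSucc))
        (fun i => elim1 (ghat (W (Fin.last m) (Fin.last m)))
          (W i.castSucc (Fin.last m)) (U (Fin.last m)) (U i.castSucc)) n i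
      = sol W U n i.castSucc := by
  have hW'0 : ∀ i j : Fin m, elim1 (ghat (W (Fin.last m) (Fin.last m)))
      (W i.castSucc (Fin.last m)) (W (Fin.last m) j.castSucc) (W i.castSucc j.castSucc) 0 = 0 :=
    fun i j => elim1_zero _ _ _ _ (hW0 _ _) (hW0 _ _)
  have hBx : ∀ n (i : Fin m), sol W U n i.castSucc
      = (∑ j : Fin m, conv (elim1 (ghat (W (Fin.last m) (Fin.last m)))
            (W i.castSucc (Fin.last m)) (W (Fin.last m) j.castSucc) (W i.castSucc j.castSucc))
          (fun s => sol W U s j.castSucc) n)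
        + elim1 (ghat (W (Fin.last m) (Fin.last m)))
            (W i.castSucc (Fin.last m)) (U (Fin.last m)) (U i.castSucc) n := by
    intro n i
    rw [sol_spec W U hW0 n i.castSucc, Fin.sum_univ_castSucc]
    rw [expand_last W U hW0 (W i.castSucc (Fin.last m)) n]
    rw [Finset.sum_congr rfl fun (j : Fin m) _ => conv_elim1
      (ghat (W (Fin.last m) (Fin.last m))) (W i.castSucc (Fin.last m))
      (W (Fin.last m) j.castSucc) (W i.castSucc j.castSucc)
      (fun s => sol W U s j.castSucc) n]
    rw [Finset.sum_add_distrib]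
    show _ = _ + (U i.castSucc n
      + conv (W i.castSucc (Fin.last m))
          (conv (ghat (W (Fin.last m) (Fin.last m))) (U (Fin.last m))) n)
    ring
  exact (sol_unique _ _ hW'0 (fun n i => sol W U n i.castSucc) hBx n i).symm

/-! ### The main induction -/

theorem genClass_system : ∀ (m : ℕ) (W : Fin m → Fin m → ℕ → ℝ) (cW : Fin m → Fin m → ℝ)
    (U : Fin m → ℕ → ℝ) (cU : Fin m → ℝ) (V : Fin m → ℕ → ℝ) (cV : Fin m → ℝ)
    (V₀ : ℕ → ℝ) (c₀ : ℝ),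
    (∀ i j, 0 ≤ cW i j) → (∀ i j, SG (cW i j) (W i j)) → (∀ i j, W i j 0 = 0) →
    (∀ i, 0 ≤ cU i) → (∀ i, SG (cU i) (U i)) →
    (∀ i, (∑ j, cW i j) + cU i ≤ 1) →
    (∀ i, 0 ≤ cV i) → (∀ i, SG (cV i) (V i)) → 0 ≤ c₀ → SG c₀ V₀ →
    HasSum (fun n => (∑ i, conv (V i) (fun s => sol W U s i) n) + V₀ n) 1 →
    GenClass (fun n => (∑ i, conv (V i) (fun s => sol W U s i) n) + V₀ n) := by
  intro m
  induction m with
  | zero =>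
    intro W cW U cU V cV V₀ c₀ _ _ _ _ _ _ _ _ _ hsgV₀ hsum
    obtain ⟨q, hq, hqp, h0⟩ := hsgV₀
    have hempty : ∀ n, (∑ i : Fin 0, conv (V i) (fun s => sol W U s i) n) = (0 : ℝ) :=
      fun n => by simp
    have hs1 : HasSum (fun n => c₀ * q n) 1 := by
      have he : (fun n => (∑ i : Fin 0, conv (V i) (fun s => sol W U s i) n) + V₀ n)
          = fun n => c₀ * q n := funext fun n => by rw [hempty n, zero_add, h0 n]
      rwa [he] at hsum
    have hs2 : HasSum (fun n => c₀ * q n) c₀ := by simpa using hqp.2.mul_left c₀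
    have hc1 : c₀ = 1 := hs2.unique hs1
    have hfun : (fun n => (∑ i : Fin 0, conv (V i) (fun s => sol W U s i) n) + V₀ n) = q :=
      funext fun n => by rw [hempty n, zero_add, h0 n, hc1, one_mul]
    rw [hfun]; exact hq
  | succ m IH =>
    intro W cW U cU V cV V₀ c₀ hcW hsgW hW0 hcU hsgU hrow hcV hsgV hc₀ hsgV₀ hsum
    have hc0 : 0 ≤ cW (Fin.last m) (Fin.last m) := hcW _ _
    have hrowL : (∑ j : Fin m, cW (Fin.last m) j.castSucc)
        + cW (Fin.last m) (Fin.last m) + cU (Fin.last m) ≤ 1 := by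
      have h1 := hrow (Fin.last m)
      rw [Fin.sum_univ_castSucc] at h1
      linarith
    have hSnn : 0 ≤ ∑ j : Fin m, cW (Fin.last m) j.castSucc :=
      Finset.sum_nonneg fun j _ => hcW _ _
    have hc1 : cW (Fin.last m) (Fin.last m) ≤ 1 := by
      have := hcU (Fin.last m); linarith
    have hz : cW (Fin.last m) (Fin.last m) = 1 →
        (∀ j : Fin m, cW (Fin.last m) j.castSucc = 0) ∧ cU (Fin.last m) = 0 := by
      intro h1
      have hs : (∑ j : Fin m, cW (Fin.last m) j.castSucc) + cU (Fin.last m) ≤ 0 := by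
        rw [h1] at hrowL; linarith
      constructor
      · intro j
        have hle : cW (Fin.last m) j.castSucc ≤ ∑ j : Fin m, cW (Fin.last m) j.castSucc :=
          Finset.single_le_sum (fun j _ => hcW _ _) (Finset.mem_univ j)
        have := hcU (Fin.last m); have := hcW (Fin.last m) j.castSucc
        linarith
      · have := hcU (Fin.last m); linarith
    have hinv0 : 0 ≤ (1 - cW (Fin.last m) (Fin.last m))⁻¹ :=
      inv_nonneg.mpr (by linarith)
    have hinvS : (1 - cW (Fin.last m) (Fin.last m))⁻¹
        * ((∑ j : Fin m, cW (Fin.last m) j.castSucc) + cU (Fin.last m)) ≤ 1 := by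
      rcases lt_or_eq_of_le hc1 with hlt | heq
      · calc (1 - cW (Fin.last m) (Fin.last m))⁻¹
            * ((∑ j : Fin m, cW (Fin.last m) j.castSucc) + cU (Fin.last m))
            ≤ (1 - cW (Fin.last m) (Fin.last m))⁻¹ * (1 - cW (Fin.last m) (Fin.last m)) :=
              mul_le_mul_of_nonneg_left (by linarith) hinv0
          _ = 1 := inv_mul_cancel₀ (by linarith)
      · obtain ⟨hW1, hU1⟩ := hz heq
        have he : (∑ j : Fin m, cW (Fin.last m) j.castSucc) + cU (Fin.last m) = 0 := by
          rw [Finset.sum_eq_zero fun j _ => hW1 j, hU1]; ring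
        rw [he, mul_zero]; norm_num
    -- the pointwise identity between the reduced and original mixtures
    have hCeq : ∀ n, (∑ i : Fin m, conv
          (elim1 (ghat (W (Fin.last m) (Fin.last m)))
            (V (Fin.last m)) (W (Fin.last m) i.castSucc) (V i.castSucc))
          (fun s => sol
            (fun i j => elim1 (ghat (W (Fin.last m) (Fin.last m)))
              (W i.castSucc (Fin.last m)) (W (Fin.last m) j.castSucc) (W i.castSucc j.castSucc))
            (fun i => elim1 (ghat (W (Fin.last m) (Fin.last m)))
              (W i.castSucc (Fin.last m)) (U (Fin.last m)) (U i.castSucc)) s i) n)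
          + elim1 (ghat (W (Fin.last m) (Fin.last m))) (V (Fin.last m)) (U (Fin.last m)) V₀ n
        = (∑ i, conv (V i) (fun s => sol W U s i) n) + V₀ n := by
      intro n
      have hR : (∑ i : Fin (m + 1), conv (V i) (fun s => sol W U s i) n) + V₀ n
          = ((∑ i : Fin m, conv (V i.castSucc) (fun s => sol W U s i.castSucc) n)
            + ((∑ j : Fin m, conv
                (conv (V (Fin.last m)) (conv (ghat (W (Fin.last m) (Fin.last m)))
                  (W (Fin.last m) j.castSucc)))
                (fun s => sol W U s j.castSucc) n)
              + conv (V (Fin.last m)) (conv (ghat (W (Fin.last m) (Fin.last m)))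
                  (U (Fin.last m))) n)) + V₀ n := by
        rw [Fin.sum_univ_castSucc
          (f := fun i => conv (V i) (fun s => sol W U s i) n)]
        rw [expand_last W U hW0 (V (Fin.last m)) n]
      rw [hR]
      have hstep : ∀ i : Fin m, conv
          (elim1 (ghat (W (Fin.last m) (Fin.last m)))
            (V (Fin.last m)) (W (Fin.last m) i.castSucc) (V i.castSucc))
          (fun s => sol
            (fun i j => elim1 (ghat (W (Fin.last m) (Fin.last m)))
              (W i.castSucc (Fin.last m)) (W (Fin.last m) j.castSucc) (W i.castSucc j.castSucc))
            (fun i => elim1 (ghat (W (Fin.last m) (Fin.last m)))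
              (W i.castSucc (Fin.last m)) (U (Fin.last m)) (U i.castSucc)) s i) n
          = conv (V i.castSucc) (fun s => sol W U s i.castSucc) n
            + conv (conv (V (Fin.last m)) (conv (ghat (W (Fin.last m) (Fin.last m)))
                (W (Fin.last m) i.castSucc)))
              (fun s => sol W U s i.castSucc) n := by
        intro i
        rw [show (fun s => sol
            (fun i j => elim1 (ghat (W (Fin.last m) (Fin.last m)))
              (W i.castSucc (Fin.last m)) (W (Fin.last m) j.castSucc) (W i.castSucc j.castSucc))
            (fun i => elim1 (ghat (W (Fin.last m) (Fin.last m)))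
              (W i.castSucc (Fin.last m)) (U (Fin.last m)) (U i.castSucc)) s i)
          = (fun s => sol W U s i.castSucc) from funext fun s => sol_elim W U hW0 s i]
        exact conv_elim1 _ _ _ _ _ n
      rw [Finset.sum_congr rfl fun i _ => hstep i, Finset.sum_add_distrib]
      show _ + (V₀ n + conv (V (Fin.last m))
        (conv (ghat (W (Fin.last m) (Fin.last m))) (U (Fin.last m))) n) = _
      ring
    -- rows of the reduced system
    have hrow' : ∀ i : Fin m, (∑ j : Fin m,
        (cW i.castSucc j.castSucc + cW i.castSucc (Fin.last m)
          * ((1 - cW (Fin.last m) (Fin.last m))⁻¹ * cW (Fin.last m) j.castSucc)))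
        + (cU i.castSucc + cW i.castSucc (Fin.last m)
          * ((1 - cW (Fin.last m) (Fin.last m))⁻¹ * cU (Fin.last m))) ≤ 1 := by
      intro i
      rw [Finset.sum_add_distrib]
      have hmulsum : ∑ j : Fin m, cW i.castSucc (Fin.last m)
          * ((1 - cW (Fin.last m) (Fin.last m))⁻¹ * cW (Fin.last m) j.castSucc)
          = cW i.castSucc (Fin.last m) * ((1 - cW (Fin.last m) (Fin.last m))⁻¹
            * ∑ j : Fin m, cW (Fin.last m) j.castSucc) := by
        rw [← Finset.mul_sum, ← Finset.mul_sum]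
      rw [hmulsum]
      have hk : cW i.castSucc (Fin.last m) * ((1 - cW (Fin.last m) (Fin.last m))⁻¹
          * ((∑ j : Fin m, cW (Fin.last m) j.castSucc) + cU (Fin.last m)))
          ≤ cW i.castSucc (Fin.last m) * 1 :=
        mul_le_mul_of_nonneg_left hinvS (hcW _ _)
      have hri := hrow i.castSucc
      rw [Fin.sum_univ_castSucc] at hri
      nlinarith [hcW i.castSucc (Fin.last m), hcU (Fin.last m)]
    -- the transported HasSum hypothesis
    have hsum' : HasSum (fun n => (∑ i : Fin m, conv
          (elim1 (ghat (W (Fin.last m) (Fin.last m)))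
            (V (Fin.last m)) (W (Fin.last m) i.castSucc) (V i.castSucc))
          (fun s => sol
            (fun i j => elim1 (ghat (W (Fin.last m) (Fin.last m)))
              (W i.castSucc (Fin.last m)) (W (Fin.last m) j.castSucc) (W i.castSucc j.castSucc))
            (fun i => elim1 (ghat (W (Fin.last m) (Fin.last m)))
              (W i.castSucc (Fin.last m)) (U (Fin.last m)) (U i.castSucc)) s i) n)
          + elim1 (ghat (W (Fin.last m) (Fin.last m))) (V (Fin.last m)) (U (Fin.last m)) V₀ n) 1 := by
      rw [funext hCeq]
      exact hsum
    have hmain := IH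
      (fun i j => elim1 (ghat (W (Fin.last m) (Fin.last m)))
        (W i.castSucc (Fin.last m)) (W (Fin.last m) j.castSucc) (W i.castSucc j.castSucc))
      (fun i j => cW i.castSucc j.castSucc + cW i.castSucc (Fin.last m)
        * ((1 - cW (Fin.last m) (Fin.last m))⁻¹ * cW (Fin.last m) j.castSucc))
      (fun i => elim1 (ghat (W (Fin.last m) (Fin.last m)))
        (W i.castSucc (Fin.last m)) (U (Fin.last m)) (U i.castSucc))
      (fun i => cU i.castSucc + cW i.castSucc (Fin.last m)
        * ((1 - cW (Fin.last m) (Fin.last m))⁻¹ * cU (Fin.last m)))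
      (fun i => elim1 (ghat (W (Fin.last m) (Fin.last m)))
        (V (Fin.last m)) (W (Fin.last m) i.castSucc) (V i.castSucc))
      (fun i => cV i.castSucc + cV (Fin.last m)
        * ((1 - cW (Fin.last m) (Fin.last m))⁻¹ * cW (Fin.last m) i.castSucc))
      (elim1 (ghat (W (Fin.last m) (Fin.last m))) (V (Fin.last m)) (U (Fin.last m)) V₀)
      (c₀ + cV (Fin.last m)
        * ((1 - cW (Fin.last m) (Fin.last m))⁻¹ * cU (Fin.last m)))
      (fun i j => add_nonneg (hcW _ _)
        (mul_nonneg (hcW _ _) (mul_nonneg hinv0 (hcW _ _))))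
      (fun i j => sg_elim1 hc0 hc1 (hsgW _ _) (hW0 _ _) (hcW _ _) (hcW _ _) (hcW _ _)
        (hsgW _ _) (hsgW _ _) (hsgW _ _) (fun h1 => (hz h1).1 j))
      (fun i j => elim1_zero _ _ _ _ (hW0 _ _) (hW0 _ _))
      (fun i => add_nonneg (hcU _)
        (mul_nonneg (hcW _ _) (mul_nonneg hinv0 (hcU _))))
      (fun i => sg_elim1 hc0 hc1 (hsgW _ _) (hW0 _ _) (hcU _) (hcW _ _) (hcU _)
        (hsgU _) (hsgW _ _) (hsgU _) (fun h1 => (hz h1).2))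
      hrow'
      (fun i => add_nonneg (hcV _)
        (mul_nonneg (hcV _) (mul_nonneg hinv0 (hcW _ _))))
      (fun i => sg_elim1 hc0 hc1 (hsgW _ _) (hW0 _ _) (hcV _) (hcV _) (hcW _ _)
        (hsgV _) (hsgV _) (hsgW _ _) (fun h1 => (hz h1).1 i))
      (add_nonneg hc₀ (mul_nonneg (hcV _) (mul_nonneg hinv0 (hcU _))))
      (sg_elim1 hc0 hc1 (hsgW _ _) (hW0 _ _) hc₀ (hcV _) (hcU _)
        hsgV₀ (hsgV _) (hsgU _) (fun h1 => (hz h1).2))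
      hsum'
    convert hmain using 1
    exact (funext hCeq).symm

/-! ### Final assembly -/

lemma conv_delta1 (a : ℝ) (g : ℕ → ℝ) (n : ℕ) :
    conv (fun t => a * delta 1 t) g n = if n = 0 then 0 else a * g (n - 1) := by
  rcases Nat.eq_zero_or_pos n with h0 | h1
  · subst h0; simp [conv, delta]
  · rw [if_neg (by omega)]
    unfold conv
    rw [Finset.sum_eq_single 1]
    · simp [delta]
    · intro k hk hk1; simp [delta, hk1]
    · intro hmem; simp at hmem; omega

lemma conv_delta0' (a : ℝ) (g : ℕ → ℝ) (n : ℕ) :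
    conv (fun t => a * delta 0 t) g n = a * g n := by
  unfold conv
  rw [Finset.sum_eq_single 0]
  · simp [delta]
  · intro k hk hk0; simp [delta, hk0]
  · intro hmem; simp at hmem

theorem ph_mem_genClass' (p : ℕ → ℝ) (hp : IsPH p) : GenClass p := by
  obtain ⟨hpd, m, hm, α, T, hα0, hα1, hT0, hTrow, hp0, hpn⟩ := hp
  set Wm : Fin m → Fin m → ℕ → ℝ := fun i j => fun t => T i j * delta 1 t with hWm
  set Um : Fin m → ℕ → ℝ := fun i => fun t => (1 - ∑ j, T i j) * delta 1 t with hUm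
  have hW0 : ∀ i j, Wm i j 0 = 0 := by
    intro i j; show T i j * delta 1 0 = 0; simp [delta]
  -- value of the solution
  have hf : ∀ n (i : Fin m), sol Wm Um n i
      = if n = 0 then 0 else (T ^ (n - 1)).mulVec (fun i => 1 - ∑ j, T i j) i := by
    intro n
    induction n using Nat.strong_induction_on with
    | _ n IHn =>
      intro i
      rw [sol_spec Wm Um hW0 n i]
      have hconv : ∀ j : Fin m, conv (Wm i j) (fun s => sol Wm Um s j) n
          = if n = 0 then 0 else T i j * sol Wm Um (n - 1) j := by
        intro j
        exact conv_delta1 (T i j) _ n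
      rw [Finset.sum_congr rfl fun j _ => hconv j]
      match n with
      | 0 => simp [hUm, delta]
      | 1 =>
        simp only [show (1:ℕ) - 1 = 0 from rfl, if_neg (by omega : ¬ (1:ℕ) = 0)]
        have hz0 : ∀ j : Fin m, T i j * sol Wm Um 0 j = 0 := by
          intro j; rw [IHn 0 (by omega) j]; simp
        rw [Finset.sum_congr rfl fun j _ => hz0 j, Finset.sum_const_zero]
        show (0:ℝ) + (1 - ∑ j, T i j) * delta 1 1 = _
        simp [delta, Matrix.one_mulVec]
      | (n' + 2) =>
        simp only [if_neg (by omega : n' + 2 ≠ 0)]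
        have hs : ∀ j : Fin m, sol Wm Um (n' + 2 - 1) j
            = (T ^ n').mulVec (fun i => 1 - ∑ j, T i j) j := by
          intro j
          rw [IHn (n' + 2 - 1) (by omega) j]
          simp
        rw [Finset.sum_congr rfl fun j _ => by rw [hs j]]
        show _ + (1 - ∑ j, T i j) * delta 1 (n' + 2) = _
        rw [show delta 1 (n' + 2) = 0 from by simp [delta]]
        have hmv : (T ^ (n' + 2 - 1)).mulVec (fun i => 1 - ∑ j, T i j) i
            = ∑ j, T i j * (T ^ n').mulVec (fun i => 1 - ∑ j, T i j) j := by
          have : (n' + 2 - 1) = n' + 1 := by omega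
          rw [this, pow_succ']
          rw [← Matrix.mulVec_mulVec]
          simp [Matrix.mulVec, dotProduct]
        rw [hmv]; ring
  -- the mixture equals p
  have hg : ∀ n, (∑ i, conv (fun t => α i * delta 0 t) (fun s => sol Wm Um s i) n)
      + (1 - ∑ i, α i) * delta 0 n = p n := by
    intro n
    rw [Finset.sum_congr rfl fun i _ => conv_delta0' (α i) (fun s => sol Wm Um s i) n]
    rcases Nat.eq_zero_or_pos n with h0 | h1
    · subst h0
      rw [Finset.sum_congr rfl fun i _ => by rw [hf 0 i]]
      simp [delta, hp0]
    · rw [hpn n h1]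
      rw [Finset.sum_congr rfl fun i _ => by rw [hf n i, if_neg (by omega)]]
      have hd : delta 0 n = 0 := by unfold delta; rw [if_neg (by omega)]
      rw [hd]
      simp [dotProduct]
  have hsum : HasSum (fun n => (∑ i, conv (fun t => α i * delta 0 t)
      (fun s => sol Wm Um s i) n) + (1 - ∑ i, α i) * delta 0 n) 1 := by
    rw [funext hg]; exact hpd.2
  have hmain := genClass_system m Wm (fun i j => T i j) Um (fun i => 1 - ∑ j, T i j)
    (fun i => fun t => α i * delta 0 t) (fun i => α i)
    (fun n => (1 - ∑ i, α i) * delta 0 n) (1 - ∑ i, α i)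
    (fun i j => hT0 i j)
    (fun i j => sg_scale (T i j) (genClass_delta 1) (isProbDist_delta 1))
    hW0
    (fun i => by show (0:ℝ) ≤ 1 - ∑ j, T i j; have := hTrow i; linarith)
    (fun i => sg_scale _ (genClass_delta 1) (isProbDist_delta 1))
    (fun i => by show (∑ j, T i j) + (1 - ∑ j, T i j) ≤ 1; linarith [hTrow i])
    (fun i => hα0 i)
    (fun i => sg_scale _ (genClass_delta 0) (isProbDist_delta 0))
    (by linarith)
    (sg_scale _ (genClass_delta 0) (isProbDist_delta 0))
    hsum
  convert hmain using 1
  exact (funext hg).symm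


/-- Every discrete PH distribution on ℕ can be generated from finitely supported
distributions by mixtures, convolutions, and geometric mixtures. -/
theorem ph_mem_genClass (p : ℕ → ℝ) (hp : IsPH p) : GenClass p := by
  exact ph_mem_genClass' p hp
end

section
/- The class of discrete phase-type (PH) distributions on ℕ is closed under convolution: if q₁ and q₂ are discrete PH distributions, then their convolution n ↦ ∑_{k=0}^{n} q₁ k · q₂ (n−k) is a discrete PH distribution. -/
open Matrix

/-- The class of discrete PH distributions is closed under convolution. -/
theorem ph_closed_under_convolution (q₁ q₂ : ℕ → ℝ)
    (h₁ : IsPH q₁) (h₂ : IsPH q₂) :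
    IsPH (conv q₁ q₂) := by
  obtain ⟨⟨hq1pos, hq1sum⟩, m₁, hm₁, α₁, T₁, hα₁pos, hα₁sum, hT₁pos, hT₁row, hq10, hq1n⟩ := h₁
  obtain ⟨⟨hq2pos, hq2sum⟩, m₂, hm₂, α₂, T₂, hα₂pos, hα₂sum, hT₂pos, hT₂row, hq20, hq2n⟩ := h₂
  -- abbreviations
  set s₁ : ℝ := ∑ i, α₁ i with hs₁
  set s₂ : ℝ := ∑ i, α₂ i with hs₂
  set t₁ : Fin m₁ → ℝ := fun i => 1 - ∑ j, T₁ i j with ht₁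
  set t₂ : Fin m₂ → ℝ := fun i => 1 - ∑ j, T₂ i j with ht₂
  have ht₁pos : ∀ i, 0 ≤ t₁ i := fun i => by
    simp only [ht₁]; linarith [hT₁row i]
  have hs₂le : s₂ ≤ 1 := hα₂sum
  have hs₂pos : 0 ≤ s₂ := Finset.sum_nonneg fun i _ => hα₂pos i
  have hs₁le : s₁ ≤ 1 := hα₁sum
  have hs₁pos : 0 ≤ s₁ := Finset.sum_nonneg fun i _ => hα₁pos i
  have hq1succ : ∀ k : ℕ, q₁ (k + 1) = α₁ ⬝ᵥ (T₁ ^ k) *ᵥ t₁ := by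
    intro k
    have := hq1n (k + 1) (by omega)
    simpa using this
  have hq2succ : ∀ k : ℕ, q₂ (k + 1) = α₂ ⬝ᵥ (T₂ ^ k) *ᵥ t₂ := by
    intro k
    have := hq2n (k + 1) (by omega)
    simpa using this
  -- probability distribution part
  have hconvpos : ∀ n, 0 ≤ conv q₁ q₂ n := by
    intro n
    exact Finset.sum_nonneg fun k _ => mul_nonneg (hq1pos k) (hq2pos (n - k))
  have hnorm1 : Summable fun n => ‖q₁ n‖ := by
    have := hq1sum.summable.abs
    simpa [Real.norm_eq_abs] using this
  have hnorm2 : Summable fun n => ‖q₂ n‖ := by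
    have := hq2sum.summable.abs
    simpa [Real.norm_eq_abs] using this
  have hconvsum : HasSum (conv q₁ q₂) 1 := by
    have := hasSum_sum_range_mul_of_summable_norm hnorm1 hnorm2
    rw [hq1sum.tsum_eq, hq2sum.tsum_eq] at this
    rw [mul_one] at this
    exact this
  refine ⟨⟨hconvpos, hconvsum⟩, m₁ + m₂, by omega, ?_⟩
  -- the block construction on the sum type
  set αS : Fin m₁ ⊕ Fin m₂ → ℝ := Sum.elim α₁ (fun j => (1 - s₁) * α₂ j) with hαS
  set TS : Matrix (Fin m₁ ⊕ Fin m₂) (Fin m₁ ⊕ Fin m₂) ℝ :=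
    Matrix.fromBlocks T₁ (Matrix.of fun i j => t₁ i * α₂ j) 0 T₂ with hTS
  have hαSsum : ∑ i, αS i = s₁ + (1 - s₁) * s₂ := by
    rw [Fintype.sum_sum_type]
    simp [hαS, ← Finset.mul_sum]
    rfl
  have hrow1 : ∀ i : Fin m₁, ∑ j, TS (Sum.inl i) j = ∑ j, T₁ i j + t₁ i * s₂ := by
    intro i
    rw [Fintype.sum_sum_type]
    simp only [hTS, Matrix.fromBlocks_apply₁₁, Matrix.fromBlocks_apply₁₂, Matrix.of_apply]
    rw [← Finset.mul_sum]
  have hrow2 : ∀ i : Fin m₂, ∑ j, TS (Sum.inr i) j = ∑ j, T₂ i j := by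
    intro i
    rw [Fintype.sum_sum_type]
    simp [hTS]
  set tS : Fin m₁ ⊕ Fin m₂ → ℝ := fun i => 1 - ∑ j, TS i j with htS
  have htSeq : tS = Sum.elim (fun i => t₁ i * (1 - s₂)) t₂ := by
    funext i
    cases i with
    | inl i =>
      simp only [htS, hrow1 i, Sum.elim_inl, ht₁]
      ring
    | inr i =>
      simp only [htS, hrow2 i, Sum.elim_inr, ht₂]
  have hstep1 : ∀ j : ℕ, T₁ *ᵥ ((T₁ ^ j) *ᵥ t₁) = (T₁ ^ (j + 1)) *ᵥ t₁ := by
    intro j; rw [Matrix.mulVec_mulVec, ← pow_succ']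
  -- key computation: (TS^n) *ᵥ tS
  have key : ∀ n : ℕ, (TS ^ n) *ᵥ tS =
      Sum.elim (fun i => ∑ j ∈ Finset.range (n + 1), ((T₁ ^ j) *ᵥ t₁) i * q₂ (n - j))
        ((T₂ ^ n) *ᵥ t₂) := by
    intro n
    induction n with
    | zero =>
      rw [pow_zero, Matrix.one_mulVec, htSeq]
      funext i
      cases i with
      | inl i => simp [hq20]
      | inr i => simp
    | succ n ih =>
      rw [pow_succ', ← Matrix.mulVec_mulVec, ih, hTS]
      funext i
      cases i with
      | inl i =>
        rw [Matrix.fromBlocks_mulVec]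
        simp only [Sum.elim_inl, Pi.add_apply, Sum.elim_comp_inl, Sum.elim_comp_inr]
        have hB : ((Matrix.of (fun i j => t₁ i * α₂ j) : Matrix (Fin m₁) (Fin m₂) ℝ) *ᵥ
            ((T₂ ^ n) *ᵥ t₂)) i = t₁ i * q₂ (n + 1) := by
          simp only [Matrix.mulVec, dotProduct, Matrix.of_apply, hq2succ n]
          rw [Finset.mul_sum]
          exact Finset.sum_congr rfl fun j _ => by ring
        rw [hB]
        have hA : (T₁ *ᵥ fun i => ∑ j ∈ Finset.range (n + 1),
            ((T₁ ^ j) *ᵥ t₁) i * q₂ (n - j)) i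
            = ∑ j ∈ Finset.range (n + 1), ((T₁ ^ (j + 1)) *ᵥ t₁) i * q₂ (n - j) := by
          simp only [Matrix.mulVec, dotProduct, Finset.mul_sum]
          rw [Finset.sum_comm]
          refine Finset.sum_congr rfl fun j _ => ?_
          have h := congrFun (hstep1 j) i
          simp only [Matrix.mulVec, dotProduct] at h
          rw [← h, Finset.sum_mul]
          exact Finset.sum_congr rfl fun k _ => by ring
        rw [hA,
          Finset.sum_range_succ' (fun j => ((T₁ ^ j) *ᵥ t₁) i * q₂ (n + 1 - j)) (n + 1)]
        simp only [pow_zero, Matrix.one_mulVec, Nat.succ_sub_succ, Nat.sub_zero]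
      | inr i =>
        rw [Matrix.fromBlocks_mulVec]
        simp only [Sum.elim_inr, Pi.add_apply, Sum.elim_comp_inl, Sum.elim_comp_inr,
          Matrix.zero_mulVec, Pi.zero_apply, zero_add]
        rw [Matrix.mulVec_mulVec, ← pow_succ']
  -- value of the convolution at n+1 in terms of the block representation
  have hdot : ∀ n : ℕ, conv q₁ q₂ (n + 1) = αS ⬝ᵥ (TS ^ n) *ᵥ tS := by
    intro n
    rw [key n, hαS]
    rw [sumElim_dotProduct_sumElim]
    have h2 : ((fun j => (1 - s₁) * α₂ j) ⬝ᵥ ((T₂ ^ n) *ᵥ t₂)) = (1 - s₁) * q₂ (n + 1) := by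
      rw [hq2succ n]
      simp only [dotProduct, Finset.mul_sum]
      exact Finset.sum_congr rfl fun j _ => by ring
    have h1 : (α₁ ⬝ᵥ fun i => ∑ j ∈ Finset.range (n + 1), ((T₁ ^ j) *ᵥ t₁) i * q₂ (n - j))
        = ∑ j ∈ Finset.range (n + 1), q₁ (j + 1) * q₂ (n - j) := by
      have expand : ∀ (v : Fin m₁ → ℝ), α₁ ⬝ᵥ v = ∑ i, α₁ i * v i := fun v => rfl
      rw [expand]
      simp only [Finset.mul_sum]
      rw [Finset.sum_comm]
      refine Finset.sum_congr rfl fun j _ => ?_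
      rw [hq1succ j, expand, Finset.sum_mul]
      exact Finset.sum_congr rfl fun k _ => by ring
    rw [h1, h2]
    unfold conv
    rw [Finset.sum_range_succ']
    simp only [Nat.succ_sub_succ, Nat.sub_zero, hq10]
  -- transport along the equivalence Fin m₁ ⊕ Fin m₂ ≃ Fin (m₁ + m₂)
  set e : Fin m₁ ⊕ Fin m₂ ≃ Fin (m₁ + m₂) := finSumFinEquiv with he
  refine ⟨αS ∘ e.symm, TS.submatrix e.symm e.symm, ?_, ?_, ?_, ?_, ?_, ?_⟩
  · intro i
    cases h : e.symm i with
    | inl j => simp [hαS, h, hα₁pos j]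
    | inr j =>
      simp only [hαS, h, Function.comp_apply, Sum.elim_inr]
      exact mul_nonneg (by linarith) (hα₂pos j)
  · have : ∑ i, (αS ∘ e.symm) i = ∑ i, αS i := Equiv.sum_comp e.symm αS
    rw [this, hαSsum]
    nlinarith
  · intro i j
    cases h : e.symm i with
    | inl a =>
      cases h' : e.symm j with
      | inl b => simp [hTS, h, h', hT₁pos a b]
      | inr b =>
        simp only [hTS, h, h', Matrix.submatrix_apply, Matrix.fromBlocks_apply₁₂, Matrix.of_apply]
        exact mul_nonneg (ht₁pos a) (hα₂pos b)
    | inr a =>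
      cases h' : e.symm j with
      | inl b => simp [hTS, h, h']
      | inr b => simp [hTS, h, h', hT₂pos a b]
  · intro i
    have hrw : ∑ j, TS.submatrix e.symm e.symm i j = ∑ j, TS (e.symm i) j := by
      simp only [Matrix.submatrix_apply]
      exact Equiv.sum_comp e.symm (fun j => TS (e.symm i) j)
    rw [hrw]
    cases h : e.symm i with
    | inl a =>
      rw [hrow1 a]
      show ∑ j, T₁ a j + (1 - ∑ j, T₁ a j) * s₂ ≤ 1
      nlinarith [mul_nonneg (by linarith [hT₁row a] : (0:ℝ) ≤ 1 - ∑ j, T₁ a j)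
        (by linarith : (0:ℝ) ≤ 1 - s₂)]
    | inr a =>
      rw [hrow2 a]
      exact hT₂row a
  · show conv q₁ q₂ 0 = _
    have : ∑ i, (αS ∘ e.symm) i = ∑ i, αS i := Equiv.sum_comp e.symm αS
    rw [this, hαSsum]
    simp [conv, hq10, hq20]
    ring
  · intro n hn
    have hpow : ∀ k : ℕ, (TS.submatrix e.symm e.symm) ^ k = (TS ^ k).submatrix e.symm e.symm := by
      intro k
      induction k with
      | zero => simp [Matrix.submatrix_one_equiv]
      | succ k ihk => rw [pow_succ, pow_succ, ihk, Matrix.submatrix_mul_equiv]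
    obtain ⟨k, rfl⟩ : ∃ k, n = k + 1 := ⟨n - 1, by omega⟩
    have htrans : (fun i => 1 - ∑ j, TS.submatrix e.symm e.symm i j) = tS ∘ e.symm := by
      funext i
      simp only [htS, Function.comp_apply, Matrix.submatrix_apply]
      congr 1
      exact Equiv.sum_comp e.symm (fun j => TS (e.symm i) j)
    rw [htrans]
    simp only [Nat.add_sub_cancel, hpow (k := k)]
    have hc : (tS ∘ ⇑e.symm) ∘ ⇑e.symm.symm = tS := by
      funext y; simp
    have hmv : (TS ^ k).submatrix e.symm e.symm *ᵥ (tS ∘ e.symm)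
        = ((TS ^ k) *ᵥ tS) ∘ e.symm := by
      rw [Matrix.submatrix_mulVec_equiv, hc]
    rw [hmv]
    have hd : (αS ∘ e.symm) ⬝ᵥ (((TS ^ k) *ᵥ tS) ∘ e.symm) = αS ⬝ᵥ ((TS ^ k) *ᵥ tS) :=
      Equiv.sum_comp e.symm (fun s => αS s * ((TS ^ k) *ᵥ tS) s)
    rw [hd, ← hdot k]
end

section
/- The class of discrete phase-type (PH) distributions on ℕ is closed under geometric mixtures: if q is a discrete PH distribution and p ∈ (0,1), then the geometric mixture n ↦ ∑_{k=0}^{∞} (1−p) p^k q^{∗k} n (where q^{∗k} is the k-fold convolution of q with itself, and q^{∗0} is the point mass at 0) is a discrete PH distribution. -/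
open Matrix

lemma convPow_nonneg {q : ℕ → ℝ} (hq : ∀ n, 0 ≤ q n) (k : ℕ) : ∀ n, 0 ≤ convPow q k n := by
  induction k with
  | zero => intro n; simp only [convPow]; split <;> norm_num
  | succ k ih =>
    intro n
    rw [show convPow q (k+1) = conv q (convPow q k) from rfl, conv]
    exact Finset.sum_nonneg fun j _ => mul_nonneg (hq j) (ih _)

lemma convPow_hasSum {q : ℕ → ℝ} (hq : ∀ n, 0 ≤ q n) (h1 : HasSum q 1) (k : ℕ) :
    HasSum (convPow q k) 1 := by
  induction k with
  | zero =>
    have : HasSum (fun n : ℕ => if n = 0 then (1:ℝ) else 0) 1 := hasSum_ite_eq 0 1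
    simpa [convPow] using this
  | succ k ih =>
    have hn1 : Summable fun n => ‖q n‖ := by
      simpa [Real.norm_eq_abs, abs_of_nonneg (hq _)] using h1.summable
    have hn2 : Summable fun n => ‖convPow q k n‖ := by
      simpa [Real.norm_eq_abs, abs_of_nonneg (convPow_nonneg hq k _)] using ih.summable
    have h := hasSum_sum_range_mul_of_summable_norm hn1 hn2
    rw [h1.tsum_eq, ih.tsum_eq] at h
    simp only [mul_one] at h
    exact h

lemma convPow_le_one {q : ℕ → ℝ} (hq : ∀ n, 0 ≤ q n) (h1 : HasSum q 1) (k n : ℕ) :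
    convPow q k n ≤ 1 :=
  le_hasSum (convPow_hasSum hq h1 k) n fun m _ => convPow_nonneg hq k m

lemma geomMix_summable {q : ℕ → ℝ} {p : ℝ} (hq : ∀ n, 0 ≤ q n) (h1 : HasSum q 1)
    (hp0 : 0 < p) (hp1 : p < 1) (n : ℕ) :
    Summable fun k => (1 - p) * p ^ k * convPow q k n := by
  refine Summable.of_nonneg_of_le
    (fun k => mul_nonneg (mul_nonneg (by linarith) (pow_nonneg hp0.le k)) (convPow_nonneg hq k n))
    (fun k => ?_) ((summable_geometric_of_lt_one hp0.le hp1).mul_left (1 - p))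
  exact mul_le_of_le_one_right (mul_nonneg (by linarith) (pow_nonneg hp0.le k))
    (convPow_le_one hq h1 k n)

lemma geomMix_nonneg {q : ℕ → ℝ} {p : ℝ} (hq : ∀ n, 0 ≤ q n)
    (hp0 : 0 < p) (hp1 : p < 1) (n : ℕ) : 0 ≤ geomMix p q n :=
  tsum_nonneg fun k => mul_nonneg (mul_nonneg (by linarith) (pow_nonneg hp0.le k))
    (convPow_nonneg hq k n)

lemma geomMix_rec {q : ℕ → ℝ} {p : ℝ} (hq : ∀ n, 0 ≤ q n) (h1 : HasSum q 1)
    (hp0 : 0 < p) (hp1 : p < 1) (n : ℕ) :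
    geomMix p q n = (1 - p) * (if n = 0 then 1 else 0)
      + p * ∑ j ∈ Finset.range (n + 1), q j * geomMix p q (n - j) := by
  rw [geomMix, (geomMix_summable hq h1 hp0 hp1 n).tsum_eq_zero_add]
  congr 1
  · simp [convPow]
  · have hterm : ∀ k : ℕ, (1 - p) * p ^ (k+1) * convPow q (k+1) n
        = ∑ j ∈ Finset.range (n+1), p * q j * ((1 - p) * p ^ k * convPow q k (n - j)) := by
      intro k
      rw [show convPow q (k+1) = conv q (convPow q k) from rfl, conv, Finset.mul_sum]
      exact Finset.sum_congr rfl fun j _ => by ring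
    rw [tsum_congr hterm,
      Summable.tsum_finsetSum (fun j _ => ((geomMix_summable hq h1 hp0 hp1 (n-j)).mul_left (p * q j))),
      Finset.mul_sum]
    refine Finset.sum_congr rfl fun j _ => ?_
    rw [tsum_mul_left, geomMix]
    ring

lemma geomMix_hasSum {q : ℕ → ℝ} {p : ℝ} (hq : ∀ n, 0 ≤ q n) (h1 : HasSum q 1)
    (hp0 : 0 < p) (hp1 : p < 1) : HasSum (geomMix p q) 1 := by
  set F : ℕ × ℕ → ℝ := fun kn => (1 - p) * p ^ kn.1 * convPow q kn.1 kn.2 with hF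
  have hFnn : ∀ kn, 0 ≤ F kn := fun kn =>
    mul_nonneg (mul_nonneg (by linarith) (pow_nonneg hp0.le _)) (convPow_nonneg hq _ _)
  have hrow : ∀ k, HasSum (fun n => F (k, n)) ((1 - p) * p ^ k) := fun k => by
    simpa using (convPow_hasSum hq h1 k).mul_left ((1 - p) * p ^ k)
  have hgeom : Summable fun k : ℕ => (1 - p) * p ^ k :=
    (summable_geometric_of_lt_one hp0.le hp1).mul_left _
  have hFsum : Summable F := by
    refine (summable_prod_of_nonneg hFnn).2 ⟨fun k => (hrow k).summable, ?_⟩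
    have : (fun k : ℕ => ∑' n, F (k, n)) = fun k : ℕ => (1 - p) * p ^ k :=
      funext fun k => (hrow k).tsum_eq
    rw [this]; exact hgeom
  have htot : ∑' kn, F kn = 1 := by
    rw [hFsum.tsum_prod]
    rw [tsum_congr (fun k => (hrow k).tsum_eq), tsum_mul_left,
      tsum_geometric_of_lt_one hp0.le hp1]
    exact mul_inv_cancel₀ (by linarith)
  have hFtot : HasSum F 1 := htot ▸ hFsum.hasSum
  have hFtot' : HasSum (F ∘ ⇑(Equiv.prodComm ℕ ℕ)) 1 :=
    ((Equiv.prodComm ℕ ℕ).hasSum_iff).2 hFtot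
  exact hFtot'.prod_fiberwise fun n => (geomMix_summable hq h1 hp0 hp1 n).hasSum

/-- The class of discrete PH distributions is closed under geometric mixtures. -/
theorem ph_closed_under_geometric_mixture (q : ℕ → ℝ) (p : ℝ)
    (hq : IsPH q) (hp : p ∈ Set.Ioo (0 : ℝ) 1) :
    IsPH (geomMix p q) := by
  obtain ⟨⟨hqnn, hqsum⟩, m, hm, α, T, hαnn, hαsum, hTnn, hTrow, hq0, hqn⟩ := hq
  obtain ⟨hp0, hp1⟩ := hp
  set t : Fin m → ℝ := fun i => 1 - ∑ j, T i j with ht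
  have htnn : ∀ i, 0 ≤ t i := fun i => by
    have := hTrow i; simp only [ht]; linarith
  set A : ℝ := ∑ i, α i with hA
  have hAnn : 0 ≤ A := Finset.sum_nonneg fun i _ => hαnn i
  have hq0' : q 0 = 1 - A := hq0
  have hq0nn : 0 ≤ q 0 := hqnn 0
  have hq0le : q 0 ≤ 1 := by rw [hq0']; linarith
  set d : ℝ := 1 - p * q 0 with hd
  have hdpos : 0 < d := by rw [hd]; nlinarith
  set c : ℝ := p / d with hc
  have hcnn : 0 ≤ c := div_nonneg hp0.le hdpos.le
  have hcA : c * A ≤ 1 := by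
    rw [hc, div_mul_eq_mul_div, div_le_one hdpos, hd, hq0']
    nlinarith
  have hdc : d * (1 - c * A) = 1 - p := by
    rw [hc]
    field_simp
    rw [hd, hq0']
    ring
  -- the new representation
  set S : Matrix (Fin m) (Fin m) ℝ := Matrix.of (fun i j => T i j + c * t i * α j) with hS
  set s : Fin m → ℝ := fun i => (1 - c * A) * t i with hs
  have hSrow : ∀ i, ∑ j, S i j = 1 - s i := by
    intro i
    have h1 : ∑ j, S i j = (∑ j, T i j) + c * t i * A := by
      simp only [hS, Matrix.of_apply, hA]
      rw [Finset.sum_add_distrib, ← Finset.mul_sum]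
    rw [h1, hs]
    have h2 : t i = 1 - ∑ j, T i j := by rw [ht]
    have h3 : ∑ j, T i j = 1 - t i := by linarith
    rw [h3]; ring
  set g : ℕ → ℝ := fun n => if n = 0 then 1 - c * A
    else c * (α ⬝ᵥ (S ^ (n - 1)).mulVec s) with hg
  -- key algebraic identity
  have hkey : ∀ n (v : Fin m → ℝ),
      v ⬝ᵥ (S ^ n).mulVec s
        = ∑ j ∈ Finset.range (n + 1), (v ⬝ᵥ (T ^ j).mulVec t) * g (n - j) := by
    intro n
    induction n with
    | zero =>
      intro v
      have hg0 : g 0 = 1 - c * A := by simp [hg]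
      rw [Finset.sum_range_one, Nat.sub_zero, pow_zero, pow_zero, Matrix.one_mulVec,
        Matrix.one_mulVec, hg0]
      simp only [hs, dotProduct]
      rw [Finset.sum_mul]
      exact Finset.sum_congr rfl fun i _ => by ring
    | succ n ih =>
      intro v
      have hgn : g (n + 1) = c * (α ⬝ᵥ (S ^ n).mulVec s) := by
        simp only [hg]
        rw [if_neg (Nat.succ_ne_zero n), Nat.add_sub_cancel]
      have hvS : vecMul v S = vecMul v T + (c * (v ⬝ᵥ t)) • α := by
        funext j
        simp only [vecMul, dotProduct, hS, Matrix.of_apply, Pi.add_apply, Pi.smul_apply,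
          smul_eq_mul]
        have : ∀ x, v x * (T x j + c * t x * α j)
            = v x * T x j + (c * α j) * (v x * t x) := fun x => by ring
        rw [Finset.sum_congr rfl fun x _ => this x, Finset.sum_add_distrib, ← Finset.mul_sum]
        ring
      rw [pow_succ', ← Matrix.mulVec_mulVec, Matrix.dotProduct_mulVec, hvS,
        add_dotProduct, smul_dotProduct, smul_eq_mul, ih (vecMul v T)]
      conv_rhs => rw [Finset.sum_range_succ']
      congr 1
      · refine Finset.sum_congr rfl fun j _ => ?_
        have : vecMul v T ⬝ᵥ (T ^ j).mulVec t = v ⬝ᵥ (T ^ (j + 1)).mulVec t := by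
          rw [← Matrix.dotProduct_mulVec, Matrix.mulVec_mulVec, ← pow_succ']
        rw [this, Nat.succ_sub_succ]
      · simp only [pow_zero, Matrix.one_mulVec, Nat.sub_zero]
        rw [hgn]
        ring
  -- the mixture satisfies the same recursion
  have hf0 : geomMix p q 0 = 1 - c * A := by
    have h := geomMix_rec hqnn hqsum hp0 hp1 0
    norm_num [Finset.sum_range_one] at h
    have hdf : d * geomMix p q 0 = 1 - p := by rw [hd]; linear_combination h
    exact mul_left_cancel₀ hdpos.ne' (by rw [hdf, hdc])
  have hfrec : ∀ n, geomMix p q (n + 1)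
      = c * ∑ j ∈ Finset.range (n + 1), q (j + 1) * geomMix p q (n - j) := by
    intro n
    have h := geomMix_rec hqnn hqsum hp0 hp1 (n + 1)
    rw [if_neg (Nat.succ_ne_zero n), Finset.sum_range_succ'] at h
    simp only [Nat.succ_sub_succ, Nat.sub_zero, mul_zero] at h
    have hdf : d * geomMix p q (n + 1)
        = p * ∑ j ∈ Finset.range (n + 1), q (j + 1) * geomMix p q (n - j) := by
      rw [hd]; linear_combination h
    rw [hc, div_mul_eq_mul_div, eq_div_iff hdpos.ne']
    linarith [hdf]
  have hmain : ∀ n, geomMix p q n = g n := by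
    intro n
    induction n using Nat.strong_induction_on with
    | _ n ih =>
      match n with
      | 0 => rw [hf0]; simp [hg]
      | (n + 1) =>
        rw [hfrec n]
        have hterm : ∀ j ∈ Finset.range (n + 1),
            q (j + 1) * geomMix p q (n - j) = (α ⬝ᵥ (T ^ j).mulVec t) * g (n - j) := by
          intro j hj
          rw [ih (n - j) (by omega), hqn (j + 1) (by omega)]
          simp only [Nat.add_sub_cancel, ht]
        rw [Finset.sum_congr rfl hterm, ← hkey n α]
        simp only [hg]
        rw [if_neg (Nat.succ_ne_zero n), Nat.add_sub_cancel]
  -- assemble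
  refine ⟨⟨fun n => geomMix_nonneg hqnn hp0 hp1 n, geomMix_hasSum hqnn hqsum hp0 hp1⟩,
    m, hm, fun i => c * α i, S, fun i => mul_nonneg hcnn (hαnn i), ?_, ?_, ?_, ?_, ?_⟩
  · rw [← Finset.mul_sum, ← hA]; exact hcA
  · intro i j
    simp only [hS, Matrix.of_apply]
    exact add_nonneg (hTnn i j) (mul_nonneg (mul_nonneg hcnn (htnn i)) (hαnn j))
  · intro i
    rw [hSrow i]
    have : 0 ≤ s i := by rw [hs]; exact mul_nonneg (by linarith) (htnn i)
    linarith
  · rw [hf0, ← Finset.mul_sum, ← hA]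
  · intro n hn
    have he : (fun i => 1 - ∑ j, S i j) = s := funext fun i => by rw [hSrow i]; ring
    rw [hmain n, he]
    simp only [hg]
    rw [if_neg (Nat.one_le_iff_ne_zero.mp hn)]
    simp only [dotProduct, Finset.mul_sum]
    exact Finset.sum_congr rfl fun i _ => by ring
end

section
/- For ℝ-rational sequences, singly nested star operations suffice: let D₀ ⊆ ℝ[[z]] be the set of polynomials (power series with finitely many nonzero coefficients), and let D₁ be the smallest subset of ℝ[[z]] containing D₀ together with all series (1 − f)⁻¹ for f ∈ D₀ with constant coefficient f(0) ≠ 1, and closed under addition and multiplication of power series. Then for every ℝ-rational sequence a : ℕ → ℝ (i.e., a n = uᵀ Mⁿ v for some m ≥ 1, real m×m matrix M, and real vectors u, v ∈ ℝ^m), the generating function ∑ₙ a n · zⁿ belongs to D₁. -/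
open Matrix PowerSeries

/-- `f ∈ ℝ[[z]]` has finitely many nonzero coefficients (i.e., is a polynomial). -/
def IsPolyPS (f : PowerSeries ℝ) : Prop :=
  ∃ N, ∀ n, N ≤ n → PowerSeries.coeff n f = 0

/-- `D₁`: the smallest subset of ℝ[[z]] containing the polynomials together with
all series `(1 - f)⁻¹` for polynomial `f` with constant coefficient `≠ 1`, and
closed under addition and multiplication. -/
inductive D1 : PowerSeries ℝ → Prop
  | poly (f : PowerSeries ℝ) (hf : IsPolyPS f) : D1 f
  | star (f : PowerSeries ℝ) (hf : IsPolyPS f)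
      (h1 : PowerSeries.constantCoeff f ≠ 1) : D1 (1 - f)⁻¹
  | add (f g : PowerSeries ℝ) (hf : D1 f) (hg : D1 g) : D1 (f + g)
  | mul (f g : PowerSeries ℝ) (hf : D1 f) (hg : D1 g) : D1 (f * g)

/-- `a` is an ℝ-rational sequence. -/
def IsRRational (a : ℕ → ℝ) : Prop :=
  ∃ m : ℕ, 1 ≤ m ∧
    ∃ (M : Matrix (Fin m) (Fin m) ℝ) (u v : Fin m → ℝ),
      ∀ n, a n = u ⬝ᵥ (M ^ n).mulVec v

lemma isPolyPS_coe (p : Polynomial ℝ) : IsPolyPS (p : PowerSeries ℝ) := by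
  refine ⟨p.natDegree + 1, fun n hn => ?_⟩
  rw [Polynomial.coeff_coe]
  exact Polynomial.coeff_eq_zero_of_natDegree_lt (by omega)

lemma D1_sum {ι : Type*} (s : Finset ι) (f : ι → PowerSeries ℝ)
    (h : ∀ i ∈ s, D1 (f i)) : D1 (∑ i ∈ s, f i) := by
  classical
  induction s using Finset.induction with
  | empty => simpa using D1.poly 0 ⟨0, fun n _ => by simp⟩
  | insert x s hx ih =>
    rw [Finset.sum_insert hx]
    exact D1.add _ _ (h _ (Finset.mem_insert_self _ _))
      (ih fun i hi => h i (Finset.mem_insert_of_mem hi))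

theorem aux_rational_genfun (a : ℕ → ℝ) (m : ℕ) (M : Matrix (Fin m) (Fin m) ℝ) (u v : Fin m → ℝ)
    (hav : ∀ n, a n = u ⬝ᵥ (M ^ n).mulVec v) : D1 (PowerSeries.mk a) := by
  classical
  set φ : Polynomial ℝ →+* PowerSeries ℝ := Polynomial.coeToPowerSeries.ringHom with hφ
  set A : Matrix (Fin m) (Fin m) (Polynomial ℝ) :=
    1 - (Polynomial.X : Polynomial ℝ) • M.map Polynomial.C with hA
  set B : Matrix (Fin m) (Fin m) (PowerSeries ℝ) :=
    Matrix.of fun i j => PowerSeries.mk fun n => (M ^ n) i j with hB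
  -- Step 1 : (A.map φ) * B = 1
  have step1 : (A.map φ) * B = 1 := by
    apply Matrix.ext; intro i j
    apply PowerSeries.ext; intro n
    rw [Matrix.mul_apply]
    simp only [hA, hB, Matrix.map_apply, Matrix.sub_apply, Matrix.smul_apply,
      Matrix.map_apply, map_sub, hφ, Polynomial.coeToPowerSeries.ringHom_apply]
    simp only [smul_eq_mul, Polynomial.coe_mul, Polynomial.coe_X, Polynomial.coe_C,
      Matrix.one_apply, apply_ite (fun p : Polynomial ℝ => (p : PowerSeries ℝ)),
      Polynomial.coe_one, Polynomial.coe_zero, sub_mul, ite_mul, one_mul, zero_mul,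
      map_sub, map_sum, Finset.sum_sub_distrib, Finset.sum_ite_eq, Finset.mem_univ,
      if_true, Matrix.of_apply, coeff_mk, mul_assoc, PowerSeries.coeff_one,
      apply_ite (PowerSeries.coeff n), map_zero]
    cases n with
    | zero =>
      simp [PowerSeries.coeff_zero_X_mul, Matrix.one_apply, pow_zero]
    | succ n =>
      simp only [PowerSeries.coeff_succ_X_mul, PowerSeries.coeff_C_mul, coeff_mk,
        Nat.succ_ne_zero, if_false]
      rw [pow_succ', Matrix.mul_apply]
      simp

  set d : Polynomial ℝ := A.det with hd
  have hdet : (A.map φ).det = φ d := (RingHom.map_det φ A).symm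
  have hadjm : (A.map φ).adjugate = A.adjugate.map φ := (RingHom.map_adjugate φ A).symm
  have hadj : (A.map φ).adjugate = (A.map φ).det • B := by
    calc (A.map φ).adjugate = (A.map φ).adjugate * ((A.map φ) * B) := by
          rw [step1, mul_one]
      _ = ((A.map φ).adjugate * (A.map φ)) * B := by rw [Matrix.mul_assoc]
      _ = ((A.map φ).det • (1 : Matrix (Fin m) (Fin m) (PowerSeries ℝ))) * B := by
          rw [Matrix.adjugate_mul]
      _ = (A.map φ).det • B := by rw [Matrix.smul_mul, Matrix.one_mul]
  have hconst : PowerSeries.constantCoeff (φ d) = 1 := by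
    have h0 : A.map (Polynomial.evalRingHom (0:ℝ)) = 1 := by
      apply Matrix.ext; intro i j
      simp [hA, Matrix.one_apply, apply_ite (Polynomial.eval (0:ℝ))]
    have : (Polynomial.evalRingHom (0:ℝ)) d = (A.map (Polynomial.evalRingHom (0:ℝ))).det :=
      RingHom.map_det _ A
    rw [h0, Matrix.det_one] at this
    have hc : PowerSeries.constantCoeff (φ d) = d.eval 0 := by
      rw [hφ, Polynomial.coeToPowerSeries.ringHom_apply,
        ← PowerSeries.coeff_zero_eq_constantCoeff_apply, Polynomial.coeff_coe,
        Polynomial.coeff_zero_eq_eval_zero]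
    rw [hc]
    simpa using this
  have hBij : ∀ i j, B i j = φ (A.adjugate i j) * (φ d)⁻¹ := by
    intro i j
    have h1 : φ (A.adjugate i j) = φ d * B i j := by
      have := congrFun (congrFun (hadjm.symm.trans hadj) i) j
      simpa [hdet, Matrix.map_apply] using this
    have hne : PowerSeries.constantCoeff (φ d) ≠ 0 := by rw [hconst]; exact one_ne_zero
    rw [h1, mul_comm (φ d) (B i j), mul_assoc, PowerSeries.mul_inv_cancel _ hne, mul_one]
  have hmk : PowerSeries.mk a =
      ∑ i : Fin m, ∑ j : Fin m,
        PowerSeries.C (u i) * (PowerSeries.C (v j) * B i j) := by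
    apply PowerSeries.ext; intro n
    simp only [coeff_mk, map_sum, PowerSeries.coeff_C_mul, hB, Matrix.of_apply]
    rw [hav n]
    simp only [dotProduct, mulVec, Finset.mul_sum]
    apply Finset.sum_congr rfl; intro i _
    apply Finset.sum_congr rfl; intro j _
    ring
  rw [hmk]
  have hstar : D1 ((φ d)⁻¹) := by
    have hpf : IsPolyPS (1 - φ d) := by
      have he : (1 - φ d) = (((1 - d : Polynomial ℝ) : PowerSeries ℝ)) := by
        rw [hφ]
        simp [Polynomial.coeToPowerSeries.ringHom_apply, Polynomial.coe_sub, Polynomial.coe_one]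
      rw [he]; exact isPolyPS_coe _
    have h1 : PowerSeries.constantCoeff (1 - φ d) ≠ 1 := by
      simp [hconst]
    have := D1.star _ hpf h1
    simpa [sub_sub_cancel] using this
  apply D1_sum; intro i _
  apply D1_sum; intro j _
  refine D1.mul _ _ (D1.poly _ ⟨1, fun n hn => ?_⟩) (D1.mul _ _ (D1.poly _ ⟨1, fun n hn => ?_⟩) ?_)
  · rw [PowerSeries.coeff_C]; simp; omega
  · rw [PowerSeries.coeff_C]; simp; omega
  · rw [hBij i j]
    refine D1.mul _ _ (D1.poly _ ?_) hstar
    rw [hφ, Polynomial.coeToPowerSeries.ringHom_apply]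
    exact isPolyPS_coe _


/-- For ℝ-rational sequences, singly nested star operations suffice: the
generating function of any ℝ-rational sequence lies in `D₁`. -/
theorem rational_genfun_mem_D1 (a : ℕ → ℝ) (ha : IsRRational a) :
    D1 (PowerSeries.mk a) := by
  obtain ⟨m, -, M, u, v, hav⟩ := ha
  exact aux_rational_genfun a m M u v hav
end
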